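/- arXiv:1508.00079 — 4 statements merged into one kernel-verified Lean document; each statement's English description precedes it below -/
import Mathlib

section
/- Let M be a matching in a graph G and let C1 and C2 be two vertex-disjoint odd cycles in G such that in each Ci exactly one vertex is uncovered by M and every edge of M incident to a vertex of Ci is an edge of Ci (i.e., C1 and C2 are fully matched odd cycles). If there exists an edge of G joining a vertex of C1 to a vertex of C2, then G contains a matching of size |M| + 1. -/
open SimpleGraph

/-- An odd cycle `c` is *fully matched* with respect to a matching `M`:
exactly one vertex of `c` is uncovered by `M`, and every edge of `M`
incident to a vertex of `c` is an edge of `c`. -/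
def FullyMatched {V : Type*} {G : SimpleGraph V} (M : G.Subgraph) {x : V}
    (c : G.Walk x x) : Prop :=
  (∃! v, v ∈ c.support ∧ v ∉ M.verts) ∧
  (∀ e ∈ M.edgeSet, (∃ w ∈ c.support, w ∈ e) → e ∈ c.edges)


lemma path_matching {V : Type*} [Fintype V] {G : SimpleGraph V} :
    ∀ (n : ℕ) {u v : V} (p : G.Walk u v), p.length = n → p.IsPath → Odd p.length →
    ∃ M : G.Subgraph, M.IsMatching ∧ M.verts = {x | x ∈ p.support} ∧
      2 * M.edgeSet.ncard = p.length + 1 := by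
  intro n
  induction n using Nat.strong_induction_on with
  | _ n ih =>
    intro u v p hlen hpath hodd
    cases p with
    | nil => simp at hodd
    | cons h q =>
      rename_i w
      cases q with
      | nil =>
        refine ⟨G.subgraphOfAdj h, Subgraph.IsMatching.subgraphOfAdj h, ?_, ?_⟩
        · ext z; simp [Set.mem_insert_iff]
        · rw [edgeSet_subgraphOfAdj]; simp
      | cons h' q' =>
        rename_i y
        have hq' : q'.IsPath := (hpath.of_cons).of_cons
        have hodd' : Odd q'.length := by
          obtain ⟨k, hk⟩ := hodd
          simp only [Walk.length_cons] at hk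
          exact ⟨k - 1, by omega⟩
        have hlt : q'.length < n := by simp [Walk.length_cons] at hlen; omega
        obtain ⟨M', hM', hverts', hcard'⟩ := ih q'.length hlt q' rfl hq' hodd'
        have hu : u ∉ q'.support := by
          have := hpath.support_nodup
          simp only [Walk.support_cons, List.nodup_cons] at this
          exact fun hc => this.1 (by simp [Walk.support_cons, hc])
        have hw : w ∉ q'.support := by
          have := hpath.of_cons.support_nodup
          simp only [Walk.support_cons, List.nodup_cons] at this
          exact fun hc => this.1 (by simp [Walk.support_cons, hc])
        have hdisj : Disjoint (G.subgraphOfAdj h).support M'.support := by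
          rw [hM'.support_eq_verts, hverts', support_subgraphOfAdj]
          rw [Set.disjoint_left]
          rintro z (rfl | rfl) hz <;> [exact hu hz; exact hw hz]
        refine ⟨G.subgraphOfAdj h ⊔ M',
          (Subgraph.IsMatching.subgraphOfAdj h).sup hM' hdisj, ?_, ?_⟩
        · ext z
          simp only [Subgraph.verts_sup, subgraphOfAdj_verts, hverts', Set.mem_union,
            Set.mem_insert_iff, Set.mem_singleton_iff, Set.mem_setOf_eq, Walk.support_cons,
            List.mem_cons]
          tauto
        · rw [Subgraph.edgeSet_sup, Set.ncard_union_eq ?_ (Set.toFinite _) (Set.toFinite _),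
            edgeSet_subgraphOfAdj]
          · rw [Set.ncard_singleton]
            simp only [Walk.length_cons]
            omega
          · rw [edgeSet_subgraphOfAdj, Set.disjoint_left]
            rintro e rfl he
            have := M'.edge_vert (Subgraph.mem_edgeSet.mp he)
            rw [hverts'] at this
            exact hu this

lemma mem_support_iff_mem_tail {V : Type*} {G : SimpleGraph V} {x v : V}
    {c : G.Walk x x} (hc : ¬ c.Nil) : v ∈ c.support ↔ v ∈ c.support.tail := by
  cases c with
  | nil => simp at hc
  | cons h q =>
    simp only [Walk.support_cons, List.tail_cons, List.mem_cons]
    constructor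
    · rintro (rfl | hm)
      · exact q.end_mem_support
      · exact hm
    · exact Or.inr

lemma cycle_minus_vertex {V : Type*} [Fintype V] {G : SimpleGraph V} {x : V}
    (c : G.Walk x x) (hc : c.IsCycle) (hodd : Odd c.length) {a : V} (ha : a ∈ c.support) :
    ∃ M : G.Subgraph, M.IsMatching ∧ M.verts = {v | v ∈ c.support} \ {a} ∧
      2 * M.edgeSet.ncard + 1 = c.length := by
  classical
  have h3 := hc.three_le_length
  set c' := c.rotate a ha with hc'def
  have hc' : c'.IsCycle := hc.rotate ha
  have hlen : c'.length = c.length := by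
    have := (c.rotate_darts a ha).perm.length_eq
    rw [Walk.length_darts, Walk.length_darts] at this; exact this
  have hmemc' : ∀ v, v ∈ c'.support ↔ v ∈ c.support := by
    intro v
    rw [mem_support_iff_mem_tail hc'.not_nil, mem_support_iff_mem_tail hc.not_nil]
    exact (c.support_rotate a ha).mem_iff
  obtain ⟨b, hab, q, hq⟩ := (Walk.not_nil_iff).mp hc'.not_nil
  have hqpath : q.IsPath := by
    have := hc'
    rw [hq, Walk.cons_isCycle_iff] at this
    exact this.1
  have hrpath : q.reverse.IsPath := hqpath.reverse
  have hrlen : q.reverse.length = c.length - 1 := by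
    have : c'.length = q.length + 1 := by rw [hq]; simp
    rw [Walk.length_reverse]; omega
  have hrnotnil : ¬ q.reverse.Nil := by
    rw [Walk.nil_iff_length_eq, hrlen]; omega
  obtain ⟨z, haz, q2, hq2⟩ := (Walk.not_nil_iff).mp hrnotnil
  have hq2path : q2.IsPath := by
    rw [hq2] at hrpath; exact hrpath.of_cons
  have hq2len : q2.length = c.length - 2 := by
    have : q.reverse.length = q2.length + 1 := by rw [hq2]; simp
    omega
  have hq2odd : Odd q2.length := by
    obtain ⟨k, hk⟩ := hodd
    exact ⟨k - 1, by omega⟩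
  obtain ⟨M, hM, hverts, hcard⟩ := path_matching q2.length q2 rfl hq2path hq2odd
  refine ⟨M, hM, ?_, by omega⟩
  rw [hverts]
  ext v
  simp only [Set.mem_setOf_eq, Set.mem_diff, Set.mem_singleton_iff]
  have hanotin : a ∉ q2.support := by
    have := hrpath.support_nodup
    rw [hq2, Walk.support_cons, List.nodup_cons] at this
    exact this.1
  have hmemr : ∀ w, w ∈ q.reverse.support ↔ (w = a ∨ w ∈ q2.support) := by
    intro w; rw [hq2, Walk.support_cons, List.mem_cons]
  have hmemq : ∀ w, w ∈ q.support ↔ w ∈ c.support := by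
    intro w
    rw [← hmemc' w, hq, Walk.support_cons, List.mem_cons]
    constructor
    · exact Or.inr
    · rintro (rfl | hm)
      · exact q.end_mem_support
      · exact hm
  constructor
  · intro hv
    have : v ∈ q.reverse.support := (hmemr v).mpr (Or.inr hv)
    rw [Walk.support_reverse, List.mem_reverse] at this
    exact ⟨(hmemq v).mp this, fun hva => hanotin (hva ▸ hv)⟩
  · rintro ⟨hv, hva⟩
    have : v ∈ q.reverse.support := by
      rw [Walk.support_reverse, List.mem_reverse]; exact (hmemq v).mpr hv
    rcases (hmemr v).mp this with rfl | hm
    · exact absurd rfl hva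
    · exact hm

lemma matching_card {V : Type*} [Fintype V] {G : SimpleGraph V} {N : G.Subgraph}
    (hN : N.IsMatching) : N.verts.ncard = 2 * N.edgeSet.ncard := by
  classical
  have hdeg : ∀ v : N.verts, N.coe.degree v = 1 := by
    intro v
    have := (Subgraph.isMatching_iff_forall_degree (M := N)).mp hN v v.2
    rwa [← N.coe_degree] at this
  have hsum := N.coe.sum_degrees_eq_twice_card_edges
  have h1 : Fintype.card N.verts = 2 * N.coe.edgeFinset.card := by
    rw [← hsum, ← Finset.card_univ, Finset.card_eq_sum_ones]
    exact Finset.sum_congr rfl fun v _ => by rw [← hdeg v]; congr!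
  have h2 : N.coe.edgeFinset.card = N.coe.edgeSet.ncard := by
    rw [← SimpleGraph.coe_edgeFinset, Set.ncard_coe_finset]
  have h3 : N.coe.edgeSet.ncard = N.edgeSet.ncard := by
    rw [← N.image_coe_edgeSet_coe]
    exact (Set.ncard_image_of_injective _ (Sym2.map.injective Subtype.val_injective)).symm
  have h4 : N.verts.ncard = Fintype.card N.verts := by
    rw [Set.ncard_eq_toFinset_card']
    exact Set.toFinset_card N.verts
  omega

lemma ncard_support_of_cycle {V : Type*} {G : SimpleGraph V} {x : V}
    {c : G.Walk x x} (hc : c.IsCycle) : {v | v ∈ c.support}.ncard = c.length := by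
  classical
  have h1 : {v | v ∈ c.support} = {v | v ∈ c.support.tail} := by
    ext v; exact mem_support_iff_mem_tail hc.not_nil
  rw [h1, ← List.coe_toFinset, Set.ncard_coe_finset,
    List.toFinset_card_of_nodup hc.support_nodup, List.length_tail, c.length_support]
  omega

lemma partner_mem {V : Type*} {G : SimpleGraph V} {M : G.Subgraph} {x : V} {c : G.Walk x x}
    (hfm2 : ∀ e ∈ M.edgeSet, (∃ w ∈ c.support, w ∈ e) → e ∈ c.edges)
    {v w : V} (hadj : M.Adj v w) (hv : v ∈ c.support) : w ∈ c.support :=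
  c.snd_mem_support_of_mem_edges
    (hfm2 _ (Subgraph.mem_edgeSet.mpr hadj) ⟨v, hv, Sym2.mem_mk_left v w⟩)

lemma old_side {V : Type*} [Fintype V] {G : SimpleGraph V} {M : G.Subgraph}
    (hM : M.IsMatching) {x : V} {c : G.Walk x x} (hc : c.IsCycle)
    (hfm1 : ∃! v, v ∈ c.support ∧ v ∉ M.verts)
    (hfm2 : ∀ e ∈ M.edgeSet, (∃ w ∈ c.support, w ∈ e) → e ∈ c.edges) :
    ∃ u ∈ {v | v ∈ c.support}, u ∉ M.verts ∧
      (M.induce ({v | v ∈ c.support} \ {u})).IsMatching ∧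
      2 * (M.induce ({v | v ∈ c.support} \ {u})).edgeSet.ncard + 1 = c.length := by
  obtain ⟨u, ⟨hus, huM⟩, huniq⟩ := hfm1
  have hmem : ∀ v ∈ c.support, v ≠ u → v ∈ M.verts := by
    intro v hv hvu
    by_contra hvM
    exact hvu (huniq v ⟨hv, hvM⟩)
  set s : Set V := {v | v ∈ c.support} with hs
  have hmatch : (M.induce (s \ {u})).IsMatching := by
    intro v hv
    simp only [Subgraph.induce_verts, Set.mem_diff, Set.mem_singleton_iff, hs,
      Set.mem_setOf_eq] at hv
    obtain ⟨w, hw, hwuniq⟩ := hM (hmem v hv.1 hv.2)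
    have hws : w ∈ c.support := partner_mem hfm2 hw hv.1
    have hwM : w ∈ M.verts := M.edge_vert hw.symm
    have hwu : w ≠ u := fun h => huM (h ▸ hwM)
    refine ⟨w, ?_, ?_⟩
    · simp only [Subgraph.induce_adj, Set.mem_diff, Set.mem_singleton_iff, hs, Set.mem_setOf_eq]
      exact ⟨⟨hv.1, hv.2⟩, ⟨hws, hwu⟩, hw⟩
    · intro y hy
      simp only [Subgraph.induce_adj] at hy
      exact hwuniq y hy.2.2
  refine ⟨u, hus, huM, hmatch, ?_⟩
  have hcard := matching_card hmatch
  have hverts : (M.induce (s \ {u})).verts = s \ {u} := rfl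
  rw [hverts] at hcard
  have h1 : (s \ {u}).ncard = s.ncard - 1 := Set.ncard_diff_singleton_of_mem hus
  have h2 : s.ncard = c.length := ncard_support_of_cycle hc
  have h3 := hc.three_le_length
  omega

/-- If two vertex-disjoint fully matched odd cycles are joined by an
edge of `G`, then `G` has a matching with one more edge than `M`. -/
theorem stmt2 {V : Type*} [Fintype V] (G : SimpleGraph V)
    (M : G.Subgraph) (hM : M.IsMatching)
    {x₁ x₂ : V} (c₁ : G.Walk x₁ x₁) (c₂ : G.Walk x₂ x₂)
    (hc₁ : c₁.IsCycle) (hc₂ : c₂.IsCycle)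
    (hodd₁ : Odd c₁.length) (hodd₂ : Odd c₂.length)
    (hdisj : Disjoint {v | v ∈ c₁.support} {v | v ∈ c₂.support})
    (hfm₁ : FullyMatched M c₁) (hfm₂ : FullyMatched M c₂)
    (hjoin : ∃ a ∈ c₁.support, ∃ b ∈ c₂.support, G.Adj a b) :
    ∃ M' : G.Subgraph, M'.IsMatching ∧ M'.edgeSet.ncard = M.edgeSet.ncard + 1 := by
  classical
  obtain ⟨a, ha, b, hb, hab⟩ := hjoin
  set s₁ : Set V := {v | v ∈ c₁.support} with hs₁
  set s₂ : Set V := {v | v ∈ c₂.support} with hs₂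
  set S : Set V := s₁ ∪ s₂ with hS
  obtain ⟨u₁, hu₁s, hu₁M, hN₁, hcnt₁⟩ := old_side hM hc₁ hfm₁.1 hfm₁.2
  obtain ⟨u₂, hu₂s, hu₂M, hN₂, hcnt₂⟩ := old_side hM hc₂ hfm₂.1 hfm₂.2
  set N₁ := M.induce (s₁ \ {u₁}) with hN₁def
  set N₂ := M.induce (s₂ \ {u₂}) with hN₂def
  set Mout := M.deleteVerts S with hMoutdef
  have hpart₁ : ∀ {v w}, M.Adj v w → v ∈ s₁ → w ∈ s₁ := fun h hv => partner_mem hfm₁.2 h hv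
  have hpart₂ : ∀ {v w}, M.Adj v w → v ∈ s₂ → w ∈ s₂ := fun h hv => partner_mem hfm₂.2 h hv
  have houtside : ∀ {v w}, M.Adj v w → v ∉ S → w ∉ S := by
    intro v w h hv hw
    rcases hw with hw | hw
    · exact hv (Or.inl (hpart₁ h.symm hw))
    · exact hv (Or.inr (hpart₂ h.symm hw))
  have hMout : Mout.IsMatching := by
    intro v hv
    rw [hMoutdef, Subgraph.deleteVerts_verts] at hv
    obtain ⟨w, hw, hwuniq⟩ := hM hv.1
    refine ⟨w, Subgraph.deleteVerts_adj.mpr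
      ⟨hv.1, hv.2, M.edge_vert hw.symm, houtside hw hv.2, hw⟩, ?_⟩
    intro y hy
    exact hwuniq y (Subgraph.deleteVerts_adj.mp hy).2.2.2.2
  have hMoutE : ∀ {v w : V}, s(v,w) ∈ Mout.edgeSet ↔
      (v ∈ M.verts ∧ v ∉ S ∧ w ∈ M.verts ∧ w ∉ S ∧ M.Adj v w) := by
    intro v w
    exact Subgraph.deleteVerts_adj
  have hN₁E : ∀ {v w : V}, s(v,w) ∈ N₁.edgeSet ↔
      (v ∈ s₁ \ {u₁} ∧ w ∈ s₁ \ {u₁} ∧ M.Adj v w) := by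
    intro v w; exact (Subgraph.induce_adj M (s₁ \ {u₁}) v w).to_iff
  have hN₂E : ∀ {v w : V}, s(v,w) ∈ N₂.edgeSet ↔
      (v ∈ s₂ \ {u₂} ∧ w ∈ s₂ \ {u₂} ∧ M.Adj v w) := by
    intro v w; exact (Subgraph.induce_adj M (s₂ \ {u₂}) v w).to_iff
  have hsplit : M.edgeSet = Mout.edgeSet ∪ (N₁.edgeSet ∪ N₂.edgeSet) := by
    ext e
    induction e with
    | _ v w =>
      rw [Set.mem_union, Set.mem_union, hMoutE, hN₁E, hN₂E, Subgraph.mem_edgeSet]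
      constructor
      · intro h
        have hvM := M.edge_vert h
        have hwM := M.edge_vert h.symm
        by_cases hv1 : v ∈ s₁ ∨ w ∈ s₁
        · have hv : v ∈ s₁ := hv1.elim id (fun hw' => hpart₁ h.symm hw')
          have hw : w ∈ s₁ := hpart₁ h hv
          exact Or.inr (Or.inl ⟨⟨hv, fun e => hu₁M (e ▸ hvM)⟩, ⟨hw, fun e => hu₁M (e ▸ hwM)⟩, h⟩)
        by_cases hv2 : v ∈ s₂ ∨ w ∈ s₂
        · have hv : v ∈ s₂ := hv2.elim id (fun hw' => hpart₂ h.symm hw')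
          have hw : w ∈ s₂ := hpart₂ h hv
          exact Or.inr (Or.inr ⟨⟨hv, fun e => hu₂M (e ▸ hvM)⟩, ⟨hw, fun e => hu₂M (e ▸ hwM)⟩, h⟩)
        push_neg at hv1 hv2
        exact Or.inl ⟨hvM, fun hvS => hvS.elim (fun h' => hv1.1 h') (fun h' => hv2.1 h'),
          hwM, fun hwS => hwS.elim (fun h' => hv1.2 h') (fun h' => hv2.2 h'), h⟩
      · rintro (h | h | h)
        · exact h.2.2.2.2
        · exact h.2.2
        · exact h.2.2
  have hd2 : Disjoint N₁.edgeSet N₂.edgeSet := by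
    rw [Set.disjoint_left]
    intro e he1 he2
    induction e with
    | _ v w =>
      exact Set.disjoint_left.mp hdisj (hN₁E.mp he1).1.1 (hN₂E.mp he2).1.1
  have hd1 : Disjoint Mout.edgeSet (N₁.edgeSet ∪ N₂.edgeSet) := by
    rw [Set.disjoint_left]
    intro e he1 he2
    induction e with
    | _ v w =>
      rcases he2 with he2 | he2
      · exact (hMoutE.mp he1).2.1 (Or.inl (hN₁E.mp he2).1.1)
      · exact (hMoutE.mp he1).2.1 (Or.inr (hN₂E.mp he2).1.1)
  have hMcard : M.edgeSet.ncard
      = Mout.edgeSet.ncard + (N₁.edgeSet.ncard + N₂.edgeSet.ncard) := by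
    rw [hsplit, Set.ncard_union_eq hd1 (Set.toFinite _) (Set.toFinite _),
      Set.ncard_union_eq hd2 (Set.toFinite _) (Set.toFinite _)]
  -- new matchings on the cycles
  obtain ⟨M₁, hM₁, hM₁v, hM₁c⟩ := cycle_minus_vertex c₁ hc₁ hodd₁ ha
  obtain ⟨M₂, hM₂, hM₂v, hM₂c⟩ := cycle_minus_vertex c₂ hc₂ hodd₂ hb
  have has₁ : a ∈ s₁ := ha
  have hbs₂ : b ∈ s₂ := hb
  have has₂ : a ∉ s₂ := fun h => Set.disjoint_left.mp hdisj has₁ h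
  have hbs₁ : b ∉ s₁ := fun h => Set.disjoint_left.mp hdisj h hbs₂
  have h12 : (M₁ ⊔ M₂).IsMatching := by
    refine hM₁.sup hM₂ ?_
    rw [hM₁.support_eq_verts, hM₂.support_eq_verts, hM₁v, hM₂v]
    exact (hdisj.mono Set.diff_subset Set.diff_subset)
  have h312 : (G.subgraphOfAdj hab ⊔ (M₁ ⊔ M₂)).IsMatching := by
    refine (Subgraph.IsMatching.subgraphOfAdj hab).sup h12 ?_
    rw [h12.support_eq_verts, (Subgraph.IsMatching.subgraphOfAdj hab).support_eq_verts]
    simp only [Subgraph.verts_sup, subgraphOfAdj_verts, hM₁v, hM₂v]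
    rw [Set.disjoint_left]
    rintro z (rfl | rfl) hz
    · rcases hz with hz | hz
      · exact hz.2 rfl
      · exact has₂ hz.1
    · rcases hz with hz | hz
      · exact hbs₁ hz.1
      · exact hz.2 rfl
  set Mnew := Mout ⊔ (G.subgraphOfAdj hab ⊔ (M₁ ⊔ M₂)) with hMnewdef
  have hMnewM : Mnew.IsMatching := by
    refine hMout.sup h312 ?_
    rw [hMout.support_eq_verts, h312.support_eq_verts]
    simp only [hMoutdef, Subgraph.deleteVerts_verts, Subgraph.verts_sup, subgraphOfAdj_verts,
      hM₁v, hM₂v]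
    rw [Set.disjoint_left]
    rintro z hz hz2
    apply hz.2
    rcases hz2 with (rfl | rfl) | h | h
    · exact Or.inl has₁
    · exact Or.inr hbs₂
    · exact Or.inl h.1
    · exact Or.inr h.1
  -- count edges of Mnew
  have hM₁verts : ∀ {v}, v ∈ M₁.verts → v ∈ s₁ := fun h => (hM₁v ▸ h).1
  have hM₂verts : ∀ {v}, v ∈ M₂.verts → v ∈ s₂ := fun h => (hM₂v ▸ h).1
  have hd₁₂ : Disjoint M₁.edgeSet M₂.edgeSet := by
    rw [Set.disjoint_left]
    intro e he1 he2
    induction e with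
    | _ v w =>
      exact Set.disjoint_left.mp hdisj (hM₁verts (M₁.edge_vert he1))
        (hM₂verts (M₂.edge_vert he2))
  have hdab : Disjoint (G.subgraphOfAdj hab).edgeSet (M₁.edgeSet ∪ M₂.edgeSet) := by
    rw [edgeSet_subgraphOfAdj, Set.disjoint_left]
    rintro e rfl (he | he)
    · have := hM₁verts (M₁.edge_vert (Subgraph.mem_edgeSet.mp he))
      have h2 : a ∈ M₁.verts := M₁.edge_vert (Subgraph.mem_edgeSet.mp he)
      rw [hM₁v] at h2
      exact h2.2 rfl
    · have h2 : a ∈ M₂.verts := M₂.edge_vert (Subgraph.mem_edgeSet.mp he)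
      rw [hM₂v] at h2
      exact has₂ h2.1
  have hdout : Disjoint Mout.edgeSet ((G.subgraphOfAdj hab).edgeSet ∪ (M₁.edgeSet ∪ M₂.edgeSet)) := by
    rw [Set.disjoint_left]
    intro e he1 he2
    induction e with
    | _ v w =>
      have hvS := (hMoutE.mp he1).2.1
      rcases he2 with he2 | he2 | he2
      · rw [edgeSet_subgraphOfAdj, Set.mem_singleton_iff, Sym2.eq_iff] at he2
        rcases he2 with ⟨rfl, rfl⟩ | ⟨rfl, rfl⟩
        · exact hvS (Or.inl has₁)
        · exact hvS (Or.inr hbs₂)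
      · exact hvS (Or.inl (hM₁verts (M₁.edge_vert (Subgraph.mem_edgeSet.mp he2))))
      · exact hvS (Or.inr (hM₂verts (M₂.edge_vert (Subgraph.mem_edgeSet.mp he2))))
  have hMnewcard : Mnew.edgeSet.ncard
      = Mout.edgeSet.ncard + (1 + (M₁.edgeSet.ncard + M₂.edgeSet.ncard)) := by
    rw [hMnewdef]
    simp only [Subgraph.edgeSet_sup]
    rw [Set.ncard_union_eq hdout (Set.toFinite _) (Set.toFinite _),
      Set.ncard_union_eq hdab (Set.toFinite _) (Set.toFinite _),
      Set.ncard_union_eq hd₁₂ (Set.toFinite _) (Set.toFinite _),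
      edgeSet_subgraphOfAdj, Set.ncard_singleton]
  exact ⟨Mnew, hMnewM, by omega⟩
end

section
/- Let M be a maximum matching of a graph G and let C1 and C2 be vertex-disjoint fully matched odd cycles whose unique M-unsaturated-within-cycle vertices are the two vertices of G uncovered by M. Then there is no M-alternating path between the two uncovered vertices, and in particular there is no edge of G between C1 and C2. -/
open SimpleGraph

/-- `p` is an `M`-alternating path whose first edge is not in `M`. -/
def IsAltPath {V : Type*} {G : SimpleGraph V} (M : G.Subgraph) {u w : V}
    (p : G.Walk u w) : Prop :=
  p.IsPath ∧ ∀ i, i < p.length → (p.edges.getD i (Sym2.diag u) ∈ M.edgeSet ↔ Odd i)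

namespace SimpleGraph.Walk
variable {V : Type*} {G : SimpleGraph V}

/-- The prefix of a walk consisting of its first `i` edges. -/
def wtake : ∀ {u v : V} (p : G.Walk u v) (i : ℕ), G.Walk u (p.getVert i)
  | _, _, .nil, _ => .nil
  | _, _, .cons _ _, 0 => .nil
  | _, _, .cons h q, (i+1) => .cons h (wtake q i)

lemma length_wtake {u v : V} (p : G.Walk u v) {i : ℕ} (hi : i ≤ p.length) :
    (p.wtake i).length = i := by
  induction p generalizing i with
  | nil => simp at hi; simp [hi, wtake]
  | cons h q ih =>
    cases i with
    | zero => simp [wtake]; rfl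
    | succ i => simp only [wtake, length_cons]; show (q.wtake i).length + 1 = i + 1; rw [ih (by simpa using hi)]

lemma getVert_wtake {u v : V} (p : G.Walk u v) {i j : ℕ} (hj : j ≤ i) :
    (p.wtake i).getVert j = p.getVert j := by
  induction p generalizing i j with
  | nil => cases i <;> simp [wtake]
  | cons h q ih =>
    cases i with
    | zero => interval_cases j; simp [wtake]; rfl
    | succ i =>
      cases j with
      | zero => simp [wtake]
      | succ j => simpa [wtake] using ih (by omega)

lemma support_getD {u v : V} (p : G.Walk u v) {i : ℕ} (hi : i ≤ p.length) (d : V) :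
    p.support.getD i d = p.getVert i := by
  induction p generalizing i with
  | nil => simp at hi; simp [hi]
  | cons h q ih =>
    cases i with
    | zero => simp
    | succ i => simpa using ih (by simpa using hi)

lemma edges_getD {u v : V} (p : G.Walk u v) {i : ℕ} (hi : i < p.length) (d : Sym2 V) :
    p.edges.getD i d = s(p.getVert i, p.getVert (i+1)) := by
  induction p generalizing i with
  | nil => simp at hi
  | cons h q ih =>
    cases i with
    | zero => simp
    | succ i => simpa using ih (by simpa using hi)

lemma getVert_injOn_of_nodup {u v : V} {p : G.Walk u v} (h : p.support.Nodup)
    {i j : ℕ} (hi : i ≤ p.length) (hj : j ≤ p.length) (he : p.getVert i = p.getVert j) :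
    i = j := by
  classical
  have hl : p.support.length = p.length + 1 := p.length_support
  have h1 : p.support.getD i u = p.getVert i := p.support_getD hi u
  have h2 : p.support.getD j u = p.getVert j := p.support_getD hj u
  rw [List.getD_eq_getElem p.support u (by omega)] at h1
  rw [List.getD_eq_getElem p.support u (by omega)] at h2
  exact (List.Nodup.getElem_inj_iff h).mp (h1.trans (he.trans h2.symm))

lemma nodup_of_getVert_inj {u v : V} {p : G.Walk u v}
    (h : ∀ i j, i ≤ p.length → j ≤ p.length → p.getVert i = p.getVert j → i = j) :
    p.support.Nodup := by
  classical
  have hl : p.support.length = p.length + 1 := p.length_support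
  rw [List.nodup_iff_injective_get]
  rintro ⟨i, hi⟩ ⟨j, hj⟩ hij
  simp only [List.get_eq_getElem] at hij
  have h1 : p.support.getD i u = p.getVert i := p.support_getD (by omega) u
  have h2 : p.support.getD j u = p.getVert j := p.support_getD (by omega) u
  rw [List.getD_eq_getElem p.support u (by omega)] at h1
  rw [List.getD_eq_getElem p.support u (by omega)] at h2
  exact Fin.ext (h i j (by omega) (by omega) (by rw [← h1, ← h2, hij]))

/-- injectivity of `getVert` on the interior of a cycle -/
lemma IsCycle.getVert_inj {a : V} {c : G.Walk a a} (hc : c.IsCycle)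
    {i j : ℕ} (hi1 : 1 ≤ i) (hi : i ≤ c.length) (hj1 : 1 ≤ j) (hj : j ≤ c.length)
    (he : c.getVert i = c.getVert j) : i = j := by
  classical
  have htail : c.support = a :: c.support.tail := c.support_eq_cons
  have hlt : c.support.tail.length = c.length := by
    have h := c.length_support
    rw [htail] at h; simpa using h
  obtain ⟨i, rfl⟩ : ∃ i', i = i' + 1 := ⟨i - 1, by omega⟩
  obtain ⟨j, rfl⟩ : ∃ j', j = j' + 1 := ⟨j - 1, by omega⟩
  have h1 : c.support.tail.getD i a = c.getVert (i+1) := by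
    have h := c.support_getD hi a
    rw [htail, List.getD_cons_succ] at h; exact h
  have h2 : c.support.tail.getD j a = c.getVert (j+1) := by
    have h := c.support_getD hj a
    rw [htail, List.getD_cons_succ] at h; exact h
  rw [List.getD_eq_getElem _ a (by omega)] at h1
  rw [List.getD_eq_getElem _ a (by omega)] at h2
  have := (List.Nodup.getElem_inj_iff hc.support_nodup).mp (h1.trans (he.trans h2.symm))
  omega

lemma IsCycle.getVert_ne_fst {a : V} {c : G.Walk a a} (hc : c.IsCycle)
    {i : ℕ} (hi1 : 0 < i) (hi : i < c.length) : c.getVert i ≠ a := by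
  intro h
  have : i = c.length := hc.getVert_inj (by omega) (by omega) (by omega) le_rfl
    (by rw [h, c.getVert_length])
  omega


lemma IsPath.adj_toSubgraph_iff {u v : V} {p : G.Walk u v} (hp : p.IsPath)
    {i : ℕ} (hi : i ≤ p.length) (w : V) :
    p.toSubgraph.Adj (p.getVert i) w ↔
      (i < p.length ∧ w = p.getVert (i+1)) ∨ (0 < i ∧ w = p.getVert (i-1)) := by
  have hinj : ∀ a b, a ≤ p.length → b ≤ p.length → p.getVert a = p.getVert b → a = b :=
    fun a b ha hb => getVert_injOn_of_nodup hp.support_nodup ha hb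
  constructor
  · intro h
    obtain ⟨j, hj, hjl⟩ := (toSubgraph_adj_iff _).mp h
    rw [Sym2.eq_iff] at hj
    rcases hj with ⟨h1, h2⟩ | ⟨h1, h2⟩
    · have : j = i := hinj j i (by omega) hi h1
      exact Or.inl ⟨by omega, by rw [← h2, this]⟩
    · have : j + 1 = i := hinj (j+1) i (by omega) hi h2
      exact Or.inr ⟨by omega, by rw [← h1, ← this]; simp⟩
  · rintro (⟨h1, rfl⟩ | ⟨h1, rfl⟩)
    · exact p.toSubgraph_adj_getVert h1
    · have := p.toSubgraph_adj_getVert (i := i - 1) (by omega)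
      rw [show i - 1 + 1 = i by omega] at this
      exact this.symm

end SimpleGraph.Walk


namespace SimpleGraph.Walk
variable {V : Type*} {G : SimpleGraph V}

/-- In a fully matched odd cycle with hinge `a ∉ M.verts`, the cycle edges in `M`
are exactly those at odd positions. -/
lemma cycle_alt {M : G.Subgraph} (hM : M.IsMatching) {a : V} (ha : a ∉ M.verts)
    {c : G.Walk a a} (hc : c.IsCycle) (hfm : FullyMatched M c) :
    ∀ i < c.length, (s(c.getVert i, c.getVert (i+1)) ∈ M.edgeSet ↔ Odd i) := by
  classical
  intro i
  induction i using Nat.strong_induction_on with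
  | _ i ih =>
  intro hi
  by_cases hpar : Odd i
  · simp only [hpar, iff_true]
    -- `c.getVert i` is covered by `M`, and its matching edge must be the cycle edge `e_i`.
    have hne : c.getVert i ≠ a := hc.getVert_ne_fst (by rcases hpar with ⟨k,hk⟩; omega) hi
    have hmem : c.getVert i ∈ c.support :=
      (mem_support_iff_exists_getVert).mpr ⟨i, rfl, by omega⟩
    obtain ⟨v₀, -, huniq⟩ := hfm.1
    have hcov : c.getVert i ∈ M.verts := by
      by_contra hnc
      exact hne ((huniq _ ⟨hmem, hnc⟩).trans (huniq a ⟨c.start_mem_support, ha⟩).symm)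
    obtain ⟨w, hw, hwu⟩ := hM hcov
    have hedge : s(c.getVert i, w) ∈ c.edges := by
      refine hfm.2 _ hw ⟨c.getVert i, hmem, ?_⟩
      simp
    -- this edge is some cycle edge e_j
    obtain ⟨j, hjl, hj⟩ : ∃ j, j < c.length ∧ s(c.getVert j, c.getVert (j+1)) = s(c.getVert i, w) := by
      obtain ⟨j, hjl, hj⟩ := List.mem_iff_getElem.mp hedge
      refine ⟨j, by simpa using hjl, ?_⟩
      rw [← c.edges_getD (by simpa using hjl) (Sym2.diag a), List.getD_eq_getElem _ _ hjl, hj]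
    -- j = i-1 or j = i
    have hij : j = i - 1 ∨ j = i := by
      rw [Sym2.eq_iff] at hj
      rcases hj with ⟨h1, h2⟩ | ⟨h1, h2⟩
      · right
        rcases Nat.eq_zero_or_pos j with rfl | hj0
        · exact absurd (show c.getVert i = a by rw [← h1]; simp) hne
        · exact hc.getVert_inj hj0 (by omega) (by rcases hpar with ⟨k,hk⟩; omega) (by omega) h1
      · left
        have : j + 1 = i := hc.getVert_inj (by omega) (by omega)
          (by rcases hpar with ⟨k,hk⟩; omega) (by omega) h2
        omega
    rcases hij with h' | h' <;> rw [h'] at hj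
    · -- contradiction: e_{i-1} ∉ M by IH (i-1 even)
      exfalso
      have h1 : i - 1 < i := by rcases hpar with ⟨k,hk⟩; omega
      have := (ih (i-1) h1 (by omega)).not.mpr (by rcases hpar with ⟨k,hk⟩; simp [Nat.odd_iff]; omega)
      rw [hj] at this
      exact this (Subgraph.mem_edgeSet.mpr hw)
    · rw [Sym2.eq_iff] at hj
      rcases hj with ⟨h1, h2⟩ | ⟨h1, h2⟩
      · rw [← h2] at hw; rwa [Subgraph.mem_edgeSet]
      · -- getVert i = getVert (i+1): impossible
        exfalso
        have : i = i + 1 := hc.getVert_inj (by rcases hpar with ⟨k,hk⟩; omega) (by omega)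
          (by omega) (by omega) h2.symm
        omega
  · simp only [hpar, iff_false]
    intro hmem
    rcases Nat.eq_zero_or_pos i with rfl | hi0
    · -- edge at a: contradicts a ∉ M.verts
      exact ha (M.edge_vert (Subgraph.mem_edgeSet.mp (by simpa using hmem)))
    · -- e_{i-1} ∈ M by IH; vertex getVert i would have two partners
      have hIH : s(c.getVert (i-1), c.getVert i) ∈ M.edgeSet := by
        have := (ih (i-1) (by omega) (by omega)).mpr (by simp [Nat.odd_iff] at hpar ⊢; omega)
        rwa [show i - 1 + 1 = i by omega] at this
      have h1 : M.Adj (c.getVert i) (c.getVert (i-1)) := (Subgraph.mem_edgeSet.mp hIH).symm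
      have h2 : M.Adj (c.getVert i) (c.getVert (i+1)) := Subgraph.mem_edgeSet.mp hmem
      obtain ⟨w, hw, hwu⟩ := hM (M.edge_vert h1)
      have e1 := hwu _ h1
      have e2 := hwu _ h2
      have : c.getVert (i-1) = c.getVert (i+1) := by rw [e1, e2]
      rcases Nat.eq_zero_or_pos (i-1) with h0 | hpos
      · -- i = 1, but i is even and positive: contradiction
        simp [Nat.odd_iff] at hpar; omega
      · have := hc.getVert_inj hpos (by omega) (by omega) (by omega) this
        omega

end SimpleGraph.Walk

/-- Berge: if there is an augmenting path, the matching is not maximum. -/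
lemma no_aug {V : Type*} [Fintype V] {G : SimpleGraph V}
    {M : G.Subgraph} (hM : M.IsMatching)
    (hmax : ∀ M' : G.Subgraph, M'.IsMatching → M'.edgeSet.ncard ≤ M.edgeSet.ncard)
    {a b : V} (hab : a ≠ b) (ha : a ∉ M.verts) (hb : b ∉ M.verts)
    (p : G.Walk a b) (hp : p.IsPath)
    (halt : ∀ i < p.length, (s(p.getVert i, p.getVert (i+1)) ∈ M.edgeSet ↔ Odd i)) :
    False := by
  classical
  have hn0 : 0 < p.length := by
    rcases Nat.eq_zero_or_pos p.length with h | h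
    · exact absurd (by rw [← p.getVert_zero, ← h, p.getVert_length]) hab
    · exact h
  have hlast : ¬ Odd (p.length - 1) := by
    intro hoddl
    have h := (halt (p.length - 1) (by omega)).mpr hoddl
    rw [show p.length - 1 + 1 = p.length by omega, p.getVert_length] at h
    exact hb (M.edge_vert (Subgraph.mem_edgeSet.mp h).symm)
  have hodd : Odd p.length := by
    rw [Nat.odd_iff] at hlast ⊢; omega
  have C1 : ∀ v w, v ∈ p.support → M.Adj v w → p.toSubgraph.Adj v w := by
    intro v w hv hw
    obtain ⟨i, rfl, hi⟩ := Walk.mem_support_iff_exists_getVert.mp hv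
    have hi0 : i ≠ 0 := by
      rintro rfl
      rw [p.getVert_zero] at hw
      exact ha (M.edge_vert hw)
    have hin : i ≠ p.length := by
      rintro rfl
      rw [p.getVert_length] at hw
      exact hb (M.edge_vert hw)
    obtain ⟨w₀, hw₀, hu⟩ := hM (M.edge_vert hw)
    rcases Nat.even_or_odd i with hev | hod
    · have hprev : M.Adj (p.getVert i) (p.getVert (i-1)) := by
        have h := (halt (i-1) (by omega)).mpr
          (by rw [Nat.odd_iff]; rw [Nat.even_iff] at hev; omega)
        rw [show i - 1 + 1 = i by omega] at h
        exact (Subgraph.mem_edgeSet.mp h).symm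
      rw [(hu _ hw).trans (hu _ hprev).symm]
      have h := p.toSubgraph_adj_getVert (i := i-1) (by omega)
      rw [show i - 1 + 1 = i by omega] at h
      exact h.symm
    · have hnext : M.Adj (p.getVert i) (p.getVert (i+1)) :=
        Subgraph.mem_edgeSet.mp ((halt i (by omega)).mpr hod)
      rw [(hu _ hw).trans (hu _ hnext).symm]
      exact p.toSubgraph_adj_getVert (by omega)
  set P := p.toSubgraph with hP
  let M' : G.Subgraph :=
    { verts := M.verts ∪ {v | v ∈ p.support}
      Adj := fun v w => (M.Adj v w ∧ ¬ P.Adj v w) ∨ (P.Adj v w ∧ ¬ M.Adj v w)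
      adj_sub := by rintro v w (⟨h, -⟩ | ⟨h, -⟩); exacts [M.adj_sub h, P.adj_sub h]
      edge_vert := by
        rintro v w (⟨h, -⟩ | ⟨h, -⟩)
        · exact Or.inl (M.edge_vert h)
        · exact Or.inr (by simpa [hP, Walk.mem_verts_toSubgraph] using P.edge_vert h)
      symm := by
        constructor
        rintro v w (⟨h1, h2⟩ | ⟨h1, h2⟩)
        · exact Or.inl ⟨h1.symm, fun hc => h2 hc.symm⟩
        · exact Or.inr ⟨h1.symm, fun hc => h2 hc.symm⟩ }
  have hM'adj : ∀ v w, M'.Adj v w ↔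
      ((M.Adj v w ∧ ¬ P.Adj v w) ∨ (P.Adj v w ∧ ¬ M.Adj v w)) := fun v w => Iff.rfl
  have hM' : M'.IsMatching := by
    intro v hv
    by_cases hvs : v ∈ p.support
    · obtain ⟨i, rfl, hi⟩ := Walk.mem_support_iff_exists_getVert.mp hvs
      rcases Nat.even_or_odd i with hev | hod
      · have hilt : i < p.length := by
          rcases hodd with ⟨k, hk⟩; rw [Nat.even_iff] at hev; omega
        refine ⟨p.getVert (i+1), Or.inr ⟨p.toSubgraph_adj_getVert hilt, ?_⟩, ?_⟩
        · intro hc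
          have h := (halt i hilt).mp (Subgraph.mem_edgeSet.mpr hc)
          rw [Nat.odd_iff] at h; rw [Nat.even_iff] at hev; omega
        · rintro w (⟨h1, h2⟩ | ⟨h1, h2⟩)
          · exact absurd (C1 _ _ hvs h1) h2
          · rcases (hp.adj_toSubgraph_iff hi w).mp h1 with ⟨-, rfl⟩ | ⟨hi0, rfl⟩
            · rfl
            · exfalso
              apply h2
              have h := (halt (i-1) (by omega)).mpr
                (by rw [Nat.odd_iff]; rw [Nat.even_iff] at hev; omega)
              rw [show i - 1 + 1 = i by omega] at h
              exact (Subgraph.mem_edgeSet.mp h).symm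
      · have hi0 : 0 < i := by rcases hod with ⟨k, hk⟩; omega
        have hPadj : P.Adj (p.getVert i) (p.getVert (i-1)) := by
          have h := p.toSubgraph_adj_getVert (i := i-1) (show i - 1 < p.length by omega)
          rw [show i - 1 + 1 = i by omega] at h
          exact h.symm
        refine ⟨p.getVert (i-1), Or.inr ⟨hPadj, ?_⟩, ?_⟩
        · intro hc
          have hmm := halt (i-1) (by omega : i - 1 < p.length)
          rw [show i - 1 + 1 = i by omega] at hmm
          have h := hmm.mp (Subgraph.mem_edgeSet.mpr hc.symm)
          rw [Nat.odd_iff] at h hod; omega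
        · rintro w (⟨h1, h2⟩ | ⟨h1, h2⟩)
          · exact absurd (C1 _ _ hvs h1) h2
          · rcases (hp.adj_toSubgraph_iff hi w).mp h1 with ⟨hlt, rfl⟩ | ⟨-, rfl⟩
            · exact absurd (Subgraph.mem_edgeSet.mp ((halt i hlt).mpr hod)) h2
            · rfl
    · have hvM : v ∈ M.verts := by
        rcases hv with h | h
        · exact h
        · exact absurd h hvs
      obtain ⟨w, hw, hu⟩ := hM hvM
      refine ⟨w, Or.inl ⟨hw, fun hc =>
        hvs (by simpa [hP, Walk.mem_verts_toSubgraph] using P.edge_vert hc)⟩, ?_⟩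
      rintro w' (⟨h1, -⟩ | ⟨h1, -⟩)
      · exact hu _ h1
      · exact absurd (by simpa [hP, Walk.mem_verts_toSubgraph] using P.edge_vert h1) hvs
  -- counting
  set S := P.edgeSet with hS
  have hSeq : S = {e | e ∈ p.edges} := p.edgeSet_toSubgraph
  have hSfin : S.Finite := by rw [hSeq]; exact p.edges.finite_toSet
  have hMfin : M.edgeSet.Finite := Set.toFinite _
  obtain ⟨k, hk⟩ := hodd
  have hScard : S.ncard = p.length := by
    rw [hSeq, show {e | e ∈ p.edges} = ↑p.edges.toFinset by ext e; simp, Set.ncard_coe_finset,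
      List.toFinset_card_of_nodup hp.edges_nodup, Walk.length_edges]
  have hmemS : ∀ i, i < p.length → s(p.getVert i, p.getVert (i+1)) ∈ S :=
    fun i hi => Subgraph.mem_edgeSet.mpr (p.toSubgraph_adj_getVert hi)
  have hinter : M.edgeSet ∩ S =
      (fun j => s(p.getVert (2*j+1), p.getVert (2*j+2))) '' Set.Iio k := by
    ext e
    constructor
    · rintro ⟨heM, heS⟩
      have heP : e ∈ p.edges := by rw [hSeq] at heS; exact heS
      obtain ⟨t, ht, hte⟩ := List.mem_iff_getElem.mp heP
      have htl : t < p.length := by simpa [Walk.length_edges] using ht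
      have hte' : e = s(p.getVert t, p.getVert (t+1)) := by
        rw [← hte, ← List.getD_eq_getElem _ (Sym2.diag a) ht, p.edges_getD htl]
      obtain ⟨j, hj⟩ := (halt t htl).mp (by rw [← hte']; exact heM)
      subst hj
      exact ⟨j, by simp only [Set.mem_Iio]; omega, hte'.symm⟩
    · rintro ⟨j, hj, rfl⟩
      simp only [Set.mem_Iio] at hj
      exact ⟨(halt (2*j+1) (by omega)).mpr ⟨j, rfl⟩, hmemS _ (by omega)⟩
  have hginj : Set.InjOn (fun j => s(p.getVert (2*j+1), p.getVert (2*j+2))) (Set.Iio k) := by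
    intro j1 h1 j2 h2 he
    simp only [Set.mem_Iio] at h1 h2
    simp only [Sym2.eq_iff] at he
    have hinj : ∀ a' b', a' ≤ p.length → b' ≤ p.length → p.getVert a' = p.getVert b' → a' = b' :=
      fun a' b' ha' hb' => Walk.getVert_injOn_of_nodup hp.support_nodup ha' hb'
    rcases he with ⟨e1, -⟩ | ⟨e1, -⟩
    · have := hinj _ _ (by omega) (by omega) e1; omega
    · have := hinj _ _ (by omega) (by omega) e1; omega
  have hIcard : (M.edgeSet ∩ S).ncard = k := by
    rw [hinter, Set.ncard_image_of_injOn hginj, ← Finset.coe_range, Set.ncard_coe_finset,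
      Finset.card_range]
  have hsplit : M'.edgeSet = (M.edgeSet \ S) ∪ (S \ M.edgeSet) := by
    ext e
    induction e using Sym2.ind with
    | _ v w =>
      rw [Subgraph.mem_edgeSet, hM'adj]
      simp only [Set.mem_union, Set.mem_diff, hS, Subgraph.mem_edgeSet]
  have hcard : M'.edgeSet.ncard = (M.edgeSet \ S).ncard + (S \ M.edgeSet).ncard := by
    rw [hsplit]
    exact Set.ncard_union_eq disjoint_sdiff_sdiff hMfin.diff hSfin.diff
  have h1 : M.edgeSet.ncard = (M.edgeSet \ S).ncard + (M.edgeSet ∩ S).ncard := by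
    rw [← Set.ncard_union_eq Set.disjoint_sdiff_inter hMfin.diff (hMfin.inter_of_left _),
      Set.diff_union_inter]
  have h2 : S.ncard = (S \ M.edgeSet).ncard + (S ∩ M.edgeSet).ncard := by
    rw [← Set.ncard_union_eq Set.disjoint_sdiff_inter hSfin.diff (hSfin.inter_of_left _),
      Set.diff_union_inter]
  have h3 : (S ∩ M.edgeSet).ncard = k := by rw [Set.inter_comm]; exact hIcard
  have hle := hmax M' hM'
  omega

/-- From any vertex on a fully matched odd cycle, there is an even-length alternating
path from the hinge, staying on the cycle. -/
lemma arc_core {V : Type*} {G : SimpleGraph V} {M : G.Subgraph}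
    {a : V} {c : G.Walk a a}
    (hinj : ∀ i j, 1 ≤ i → i ≤ c.length → 1 ≤ j → j ≤ c.length →
      c.getVert i = c.getVert j → i = j)
    (hnf : ∀ i, 0 < i → i < c.length → c.getVert i ≠ a)
    (halt : ∀ t < c.length, (s(c.getVert t, c.getVert (t+1)) ∈ M.edgeSet ↔ Odd t))
    {i : ℕ} (hin : i < c.length) :
    ∃ q : G.Walk a (c.getVert i), q.IsPath ∧ q.length = i ∧
      (∀ v ∈ q.support, v ∈ c.support) ∧
      ∀ t < q.length, (s(q.getVert t, q.getVert (t+1)) ∈ M.edgeSet ↔ Odd t) := by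
  refine ⟨c.wtake i, ?_, c.length_wtake (by omega), ?_, ?_⟩
  · apply Walk.IsPath.mk'
    apply Walk.nodup_of_getVert_inj
    intro j1 j2 hj1 hj2 he
    rw [c.length_wtake (by omega)] at hj1 hj2
    rw [c.getVert_wtake hj1, c.getVert_wtake hj2] at he
    rcases Nat.eq_zero_or_pos j1 with rfl | h1
    · rcases Nat.eq_zero_or_pos j2 with rfl | h2
      · rfl
      · rw [c.getVert_zero] at he
        exact absurd he.symm (hnf j2 h2 (by omega))
    · rcases Nat.eq_zero_or_pos j2 with rfl | h2
      · rw [c.getVert_zero] at he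
        exact absurd he (hnf j1 h1 (by omega))
      · exact hinj _ _ h1 (by omega) h2 (by omega) he
  · intro v hv
    obtain ⟨t, hvt, ht⟩ := Walk.mem_support_iff_exists_getVert.mp hv
    rw [c.length_wtake (by omega)] at ht
    rw [c.getVert_wtake ht] at hvt
    exact Walk.mem_support_iff_exists_getVert.mpr ⟨t, hvt, by omega⟩
  · intro t ht
    rw [c.length_wtake (by omega)] at ht
    rw [c.getVert_wtake (by omega : t ≤ i), c.getVert_wtake (by omega : t + 1 ≤ i)]
    exact halt t (by omega)

lemma arc_exists {V : Type*} {G : SimpleGraph V} {M : G.Subgraph} (hM : M.IsMatching)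
    {a : V} (ha : a ∉ M.verts) {c : G.Walk a a} (hc : c.IsCycle) (hodd : Odd c.length)
    (hfm : FullyMatched M c) {x : V} (hx : x ∈ c.support) :
    ∃ q : G.Walk a x, q.IsPath ∧ Even q.length ∧ (∀ v ∈ q.support, v ∈ c.support) ∧
      ∀ t < q.length, (s(q.getVert t, q.getVert (t+1)) ∈ M.edgeSet ↔ Odd t) := by
  have halt := Walk.cycle_alt hM ha hc hfm
  have hinj : ∀ i j, 1 ≤ i → i ≤ c.length → 1 ≤ j → j ≤ c.length →
      c.getVert i = c.getVert j → i = j :=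
    fun i j h1 h2 h3 h4 h5 => hc.getVert_inj h1 h2 h3 h4 h5
  have hnf : ∀ i, 0 < i → i < c.length → c.getVert i ≠ a :=
    fun i h1 h2 => hc.getVert_ne_fst h1 h2
  obtain ⟨i, hix, hi⟩ := Walk.mem_support_iff_exists_getVert.mp hx
  subst hix
  by_cases hxa : c.getVert i = a
  · refine ⟨Walk.nil.copy rfl hxa.symm, by simp, by simp, ?_, by simp⟩
    intro v hv
    rw [Walk.support_copy] at hv
    simp only [Walk.support_nil, List.mem_singleton] at hv
    subst hv
    exact c.start_mem_support
  have hi0 : 0 < i := by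
    rcases Nat.eq_zero_or_pos i with rfl | h
    · exact absurd c.getVert_zero hxa
    · exact h
  have hin : i < c.length := by
    rcases Nat.lt_or_ge i c.length with h | h
    · exact h
    · have hieq : i = c.length := by omega
      rw [hieq] at hxa
      exact absurd c.getVert_length hxa
  rcases Nat.even_or_odd i with hev | hod
  · obtain ⟨q, hq1, hq2, hq3, hq4⟩ := arc_core hinj hnf halt hin
    exact ⟨q, hq1, by rw [hq2]; exact hev, hq3, hq4⟩
  · -- use the reversed cycle
    have hdlen : c.reverse.length = c.length := c.length_reverse
    have hdgv : ∀ t, c.reverse.getVert t = c.getVert (c.length - t) :=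
      fun t => c.getVert_reverse t
    have hinjd : ∀ i j, 1 ≤ i → i ≤ c.reverse.length → 1 ≤ j → j ≤ c.reverse.length →
        c.reverse.getVert i = c.reverse.getVert j → i = j := by
      intro i j h1 h2 h3 h4 h5
      rw [hdlen] at h2 h4
      rw [hdgv, hdgv] at h5
      rcases Nat.lt_or_ge (c.length - i) 1 with hz | hz
      · have hieq : i = c.length := by omega
        rcases Nat.lt_or_ge (c.length - j) 1 with hz2 | hz2
        · omega
        · rw [show c.length - i = 0 by omega, c.getVert_zero] at h5
          exact absurd h5.symm (hnf _ (by omega) (by omega))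
      · rcases Nat.lt_or_ge (c.length - j) 1 with hz2 | hz2
        · rw [show c.length - j = 0 by omega, c.getVert_zero] at h5
          exact absurd h5 (hnf _ (by omega) (by omega))
        · have := hinj _ _ hz (by omega) hz2 (by omega) h5
          omega
    have hnfd : ∀ i, 0 < i → i < c.reverse.length → c.reverse.getVert i ≠ a := by
      intro i h1 h2
      rw [hdlen] at h2
      rw [hdgv]
      exact hnf _ (by omega) (by omega)
    have haltd : ∀ t < c.reverse.length,
        (s(c.reverse.getVert t, c.reverse.getVert (t+1)) ∈ M.edgeSet ↔ Odd t) := by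
      intro t ht
      rw [hdlen] at ht
      rw [hdgv, hdgv]
      have h1 : c.length - t = (c.length - (t+1)) + 1 := by omega
      rw [h1, Sym2.eq_swap]
      rw [halt (c.length - (t+1)) (by omega)]
      rcases hodd with ⟨m, hm⟩
      rw [Nat.odd_iff, Nat.odd_iff]
      omega
    have hrin : c.length - i < c.reverse.length := by omega
    obtain ⟨q, hq1, hq2, hq3, hq4⟩ := arc_core hinjd hnfd haltd hrin
    have hgv : c.reverse.getVert (c.length - i) = c.getVert i := by
      rw [hdgv, show c.length - (c.length - i) = i by omega]
    refine ⟨q.copy rfl hgv, by simp [hq1], ?_, fun v hv => ?_, ?_⟩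
    · rw [Walk.length_copy, hq2]
      rcases hodd with ⟨m, hm⟩; rcases hod with ⟨m', hm'⟩
      rw [Nat.even_sub (by omega), Nat.even_iff, Nat.even_iff]
      omega
    · rw [Walk.support_copy] at hv
      have := hq3 v hv
      rwa [Walk.support_reverse, List.mem_reverse] at this
    · intro t ht
      rw [Walk.length_copy] at ht
      rw [Walk.getVert_copy, Walk.getVert_copy]
      exact hq4 t ht

open SimpleGraph Walk in
/-- If `M` is a maximum matching whose two uncovered vertices lie on
vertex-disjoint fully matched odd cycles `c₁, c₂`, then there is no `M`-alternating
path between the uncovered vertices and no edge of `G` between the cycles. -/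
theorem stmt5 {V : Type*} [Fintype V] (G : SimpleGraph V)
    (M : G.Subgraph) (hM : M.IsMatching)
    (hmax : ∀ M' : G.Subgraph, M'.IsMatching → M'.edgeSet.ncard ≤ M.edgeSet.ncard)
    (a b : V) (hab : a ≠ b) (huncov : {v : V | v ∉ M.verts} = {a, b})
    (c₁ : G.Walk a a) (c₂ : G.Walk b b)
    (hc₁ : c₁.IsCycle) (hc₂ : c₂.IsCycle)
    (hodd₁ : Odd c₁.length) (hodd₂ : Odd c₂.length)
    (hfm₁ : FullyMatched M c₁) (hfm₂ : FullyMatched M c₂)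
    (hdisj : Disjoint {v | v ∈ c₁.support} {v | v ∈ c₂.support}) :
    (¬ ∃ p : G.Walk a b, IsAltPath M p) ∧
    (¬ ∃ x ∈ c₁.support, ∃ y ∈ c₂.support, G.Adj x y) := by
  classical
  have ha : a ∉ M.verts := by
    have h : a ∈ ({a, b} : Set V) := by simp
    rw [← huncov] at h; exact h
  have hb : b ∉ M.verts := by
    have h : b ∈ ({a, b} : Set V) := by simp
    rw [← huncov] at h; exact h
  have part1 : ¬ ∃ p : G.Walk a b, IsAltPath M p := by
    rintro ⟨p, hpath, halt⟩
    refine no_aug hM hmax hab ha hb p hpath ?_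
    intro i hi
    have h := halt i hi
    rwa [p.edges_getD hi] at h
  refine ⟨part1, ?_⟩
  rintro ⟨x, hx, y, hy, hxy⟩
  obtain ⟨q₁, hq₁p, hq₁e, hq₁s, hq₁a⟩ := arc_exists hM ha hc₁ hodd₁ hfm₁ hx
  obtain ⟨q₂, hq₂p, hq₂e, hq₂s, hq₂a⟩ := arc_exists hM hb hc₂ hodd₂ hfm₂ hy
  have hxy_nM : s(x, y) ∉ M.edgeSet := by
    intro h
    have hedge := hfm₁.2 _ h ⟨x, hx, by simp⟩
    have hy1 : y ∈ c₁.support := Walk.snd_mem_support_of_mem_edges c₁ hedge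
    exact Set.disjoint_left.mp hdisj hy1 hy
  set r : G.Walk x b := Walk.cons hxy q₂.reverse with hr
  set p : G.Walk a b := q₁.append r with hp
  set L := q₁.length + 1 + q₂.length with hL
  have hplen : p.length = L := by
    rw [hp, Walk.length_append, hr, Walk.length_cons, Walk.length_reverse]
    omega
  have hgv1 : ∀ t, t ≤ q₁.length → p.getVert t = q₁.getVert t := by
    intro t ht
    rw [hp, Walk.getVert_append]
    rcases Nat.lt_or_ge t q₁.length with h | h
    · simp [h]
    · have heq : t = q₁.length := by omega
      subst heq
      simp [hr]
  have hgv2 : ∀ t, q₁.length + 1 ≤ t → t ≤ L → p.getVert t = q₂.getVert (L - t) := by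
    intro t h1 h2
    rw [hp, Walk.getVert_append, if_neg (by omega)]
    rw [hr, Walk.getVert_cons q₂.reverse hxy (by omega : t - q₁.length ≠ 0),
      Walk.getVert_reverse]
    congr 1
    omega
  have halt : ∀ t < p.length, (s(p.getVert t, p.getVert (t+1)) ∈ M.edgeSet ↔ Odd t) := by
    intro t ht
    rw [hplen] at ht
    rcases Nat.lt_or_ge t q₁.length with h | h
    · rw [hgv1 t (by omega), hgv1 (t+1) (by omega)]
      exact hq₁a t h
    rcases Nat.eq_or_lt_of_le h with heq | hgt
    · rw [← heq] at ht ⊢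
      rw [hgv1 _ le_rfl, hgv2 (q₁.length + 1) (by omega) (by omega)]
      rw [Walk.getVert_length, show L - (q₁.length + 1) = q₂.length by omega,
        Walk.getVert_length]
      constructor
      · intro hmem; exact absurd hmem hxy_nM
      · intro hoddt
        exfalso
        rcases hq₁e with ⟨m, hm⟩; rw [Nat.odd_iff] at hoddt; omega
    · rw [hgv2 t (by omega) (by omega), hgv2 (t+1) (by omega) (by omega)]
      have hs : L - t = (L - (t+1)) + 1 := by omega
      rw [hs, Sym2.eq_swap, hq₂a (L - (t+1)) (by omega)]
      rcases hq₁e with ⟨m1, hm1⟩; rcases hq₂e with ⟨m2, hm2⟩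
      rw [Nat.odd_iff, Nat.odd_iff]; omega
  have hpp : p.IsPath := by
    apply Walk.IsPath.mk'
    rw [hp, Walk.support_append]
    refine List.Nodup.append hq₁p.support_nodup ?_ ?_
    · rw [hr, Walk.support_cons, List.tail_cons]
      exact hq₂p.reverse.support_nodup
    · intro v hv1 hv2
      rw [hr, Walk.support_cons, List.tail_cons, Walk.support_reverse,
        List.mem_reverse] at hv2
      exact Set.disjoint_left.mp hdisj (hq₁s v hv1) (hq₂s v hv2)
  exact no_aug hM hmax hab ha hb p hpp halt
end

section
/- Every cycle of odd length contains three consecutive vertices u1, u2, u3 (in cycle order) whose degrees in an ambient graph G satisfy deg(u1) ≥ deg(u2) ≥ deg(u3). -/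
open SimpleGraph

private lemma aux_edge_mem {V : Type*} {G : SimpleGraph V} :
    ∀ {u v : V} (w : G.Walk u v) {i : ℕ}, i < w.length →
      s(w.getVert i, w.getVert (i + 1)) ∈ w.edges := by
  intro u v w
  induction w with
  | nil => intro i hi; simp at hi
  | cons h p ih =>
    intro i hi
    cases i with
    | zero =>
      simp [SimpleGraph.Walk.getVert, SimpleGraph.Walk.getVert_zero]
    | succ n =>
      simp only [SimpleGraph.Walk.getVert_cons_succ, SimpleGraph.Walk.edges_cons,
        List.mem_cons]
      right
      exact ih (by simpa [SimpleGraph.Walk.length_cons, Nat.succ_lt_succ_iff] using hi)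

private lemma aux_getVert_get {V : Type*} {G : SimpleGraph V} :
    ∀ {u v : V} (w : G.Walk u v) {i : ℕ} (hi : i < w.support.length),
      w.getVert i = w.support[i] := by
  intro u v w
  induction w with
  | nil =>
    intro i hi
    simp only [SimpleGraph.Walk.support_nil, List.length_singleton] at hi
    interval_cases i
    simp [SimpleGraph.Walk.getVert_zero]
  | cons h p ih =>
    intro i hi
    cases i with
    | zero => simp [SimpleGraph.Walk.getVert_zero]
    | succ n =>
      simp only [SimpleGraph.Walk.support_cons, List.length_cons] at hi
      simp only [SimpleGraph.Walk.getVert_cons_succ, SimpleGraph.Walk.support_cons,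
        List.getElem_cons_succ]
      exact ih (by omega)

/-- Every odd cycle in a finite graph `G` has three consecutive vertices
`u₁, u₂, u₃` with `deg u₁ ≥ deg u₂ ≥ deg u₃`. -/
theorem stmt6 {V : Type*} [Fintype V] (G : SimpleGraph V) [DecidableRel G.Adj]
    {x : V} (c : G.Walk x x) (hc : c.IsCycle) (hodd : Odd c.length) :
    ∃ u₁ u₂ u₃ : V, s(u₁, u₂) ∈ c.edges ∧ s(u₂, u₃) ∈ c.edges ∧ u₁ ≠ u₃ ∧
      G.degree u₂ ≤ G.degree u₁ ∧ G.degree u₃ ≤ G.degree u₂ := by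
  set n := c.length with hn
  have hn3 : 3 ≤ n := hc.three_le_length
  have hnpos : 0 < n := by omega
  -- getVert in terms of support.tail
  have htail : ∀ i : ℕ, 1 ≤ i → i ≤ n → ∃ hi : i - 1 < c.support.tail.length,
      c.getVert i = c.support.tail[i - 1] := by
    intro i h1 h2
    have hlen : c.support.length = n + 1 := c.length_support
    have hi : i < c.support.length := by omega
    have hi' : i - 1 < c.support.tail.length := by
      rw [List.length_tail]; omega
    refine ⟨hi', ?_⟩
    obtain ⟨k, rfl⟩ : ∃ k, i = k + 1 := ⟨i - 1, by omega⟩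
    rw [aux_getVert_get c hi]
    simp [List.getElem_tail]
  -- injectivity of getVert on [0, n)
  have hinj : ∀ i j : ℕ, i < n → j < n → c.getVert i = c.getVert j → i = j := by
    intro i j hi hj hij
    have nodup := hc.2
    -- map 0 to n
    set i' := if i = 0 then n else i with hi'
    set j' := if j = 0 then n else j with hj'
    have hgi : c.getVert i = c.getVert i' := by
      by_cases h : i = 0
      · simp [hi', h, c.getVert_zero, c.getVert_length, hn]
      · simp [hi', h]
    have hgj : c.getVert j = c.getVert j' := by
      by_cases h : j = 0
      · simp [hj', h, c.getVert_zero, c.getVert_length, hn]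
      · simp [hj', h]
    have h1i : 1 ≤ i' := by by_cases h : i = 0 <;> simp [hi', h] <;> omega
    have h2i : i' ≤ n := by by_cases h : i = 0 <;> simp [hi', h] <;> omega
    have h1j : 1 ≤ j' := by by_cases h : j = 0 <;> simp [hj', h] <;> omega
    have h2j : j' ≤ n := by by_cases h : j = 0 <;> simp [hj', h] <;> omega
    obtain ⟨hii, eqi⟩ := htail i' h1i h2i
    obtain ⟨hjj, eqj⟩ := htail j' h1j h2j
    have : c.support.tail[i' - 1] = c.support.tail[j' - 1] := by
      rw [← eqi, ← eqj, ← hgi, ← hgj, hij]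
    have hidx : i' - 1 = j' - 1 := (nodup.getElem_inj_iff).mp this
    by_cases h : i = 0 <;> by_cases h' : j = 0 <;>
      simp [hi', hj', h, h'] at hidx ⊢ <;> omega
  -- the cyclic vertex sequence
  set v : ℕ → V := fun i => c.getVert (i % n) with hv
  have hmod1 : ∀ i : ℕ, (i + 1) % n = (i % n + 1) % n := by
    intro i
    rw [Nat.add_mod, Nat.mod_eq_of_lt (show 1 < n by omega)]
  have hmod2 : ∀ i : ℕ, (i + 2) % n = (i % n + 2) % n := by
    intro i
    rw [Nat.add_mod, Nat.mod_eq_of_lt (show 2 < n by omega)]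
  have hvsucc : ∀ i : ℕ, v (i + 1) = c.getVert (i % n + 1) := by
    intro i
    have hlt : i % n < n := Nat.mod_lt _ hnpos
    rcases Nat.lt_or_ge (i % n + 1) n with h | h
    · have : (i + 1) % n = i % n + 1 := by rw [hmod1, Nat.mod_eq_of_lt h]
      simp [hv, this]
    · have hen : i % n + 1 = n := by omega
      have : (i + 1) % n = 0 := by rw [hmod1, hen, Nat.mod_self]
      simp only [hv]
      rw [this, c.getVert_zero, hen, c.getVert_length]
  have hedge : ∀ i : ℕ, s(v i, v (i + 1)) ∈ c.edges := by
    intro i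
    rw [hvsucc i]
    exact aux_edge_mem c (Nat.mod_lt _ hnpos)
  have hne : ∀ i : ℕ, v i ≠ v (i + 2) := by
    intro i h
    have h1 : i % n < n := Nat.mod_lt _ hnpos
    have h2 : (i + 2) % n < n := Nat.mod_lt _ hnpos
    have heq := hinj _ _ h1 h2 h
    rw [hmod2] at heq
    by_cases hc1 : i % n + 2 < n
    · rw [Nat.mod_eq_of_lt hc1] at heq; omega
    · by_cases hc2 : i % n + 2 = n
      · rw [hc2, Nat.mod_self] at heq; omega
      · have hc3 : i % n + 1 = n := by omega
        have : (i % n + 2) % n = 1 := by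
          rw [show i % n + 2 = n + 1 by omega, Nat.add_mod_left,
            Nat.mod_eq_of_lt (show 1 < n by omega)]
        omega
  by_contra hcon
  push_neg at hcon
  set F : ℕ → ℕ := fun i => G.degree (v i) with hF
  have key : ∀ i : ℕ, ¬(F (i + 1) ≤ F i ∧ F (i + 2) ≤ F (i + 1)) ∧
      ¬(F (i + 1) ≤ F (i + 2) ∧ F i ≤ F (i + 1)) := by
    intro i
    constructor
    · intro ⟨h1, h2⟩
      exact absurd (hcon (v i) (v (i + 1)) (v (i + 2)) (hedge i) (hedge (i + 1)) (hne i) h1)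
        (not_lt.mpr h2)
    · intro ⟨h1, h2⟩
      have e1 : s(v (i + 2), v (i + 1)) ∈ c.edges := by
        rw [Sym2.eq_swap]; exact hedge (i + 1)
      have e2 : s(v (i + 1), v i) ∈ c.edges := by
        rw [Sym2.eq_swap]; exact hedge i
      exact absurd (hcon (v (i + 2)) (v (i + 1)) (v i) e1 e2 (hne i).symm h1)
        (not_lt.mpr h2)
  set S : ℕ → Prop := fun i => F i < F (i + 1) with hS
  have step : ∀ i : ℕ, S (i + 1) ↔ ¬ S i := by
    intro i
    obtain ⟨k1, k2⟩ := key i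
    simp only [hS, not_lt]
    have h12 : F (i + 1 + 1) = F (i + 2) := rfl
    omega
  have alt : ∀ i : ℕ, (S i ↔ S 0) ↔ Even i := by
    intro i
    induction i with
    | zero => simp
    | succ k ih =>
      rw [step k, Nat.even_add_one, ← ih]
      tauto
  have hper : S n ↔ S 0 := by
    have h0 : v n = v 0 := by simp [hv, Nat.mod_self]
    have h1 : v (n + 1) = v 1 := by
      simp [hv, Nat.add_mod_left]
    show F n < F (n + 1) ↔ F 0 < F (0 + 1)
    simp only [hF]
    rw [h0, h1]
  have : Even n := (alt n).mp hper
  exact (Nat.not_odd_iff_even.mpr this) hodd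
end

section
/- Kundu's theorem: A graphic sequence π = (d1, ..., dn) has a realization containing a k-factor if and only if the sequence π − k = (d1 − k, ..., dn − k) is graphic. -/
open Finset
attribute [local instance] Classical.propDecidable

variable {n : ℕ}

noncomputable def Nf (K : SimpleGraph (Fin n)) (v : Fin n) : Finset (Fin n) :=
  univ.filter (fun w => K.Adj v w)

@[simp] lemma mem_Nf {K : SimpleGraph (Fin n)} {v w : Fin n} : w ∈ Nf K v ↔ K.Adj v w := by
  simp [Nf]

def pr (a b x y : Fin n) : Prop := (x = a ∧ y = b) ∨ (x = b ∧ y = a)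

lemma pr_symm {a b x y : Fin n} : pr a b x y → pr a b y x := by unfold pr; tauto

lemma pr_iff {a b x y : Fin n} : pr a b x y ↔ s(x,y) = s(a,b) := by
  rw [Sym2.eq_iff]; rfl

/-- two-switch: remove edges pq, rs; add edges pr, qs -/
def sw (K : SimpleGraph (Fin n)) (p q r s : Fin n) : SimpleGraph (Fin n) where
  Adj x y := (K.Adj x y ∧ ¬ pr p q x y ∧ ¬ pr r s x y) ∨ ((pr p r x y ∨ pr q s x y) ∧ x ≠ y)
  symm := by
    constructor
    intro x y h
    rcases h with ⟨h1, h2, h3⟩ | ⟨h1, h2⟩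
    · exact Or.inl ⟨h1.symm, fun hc => h2 (pr_symm hc), fun hc => h3 (pr_symm hc)⟩
    · exact Or.inr ⟨by rcases h1 with h | h; exact Or.inl (pr_symm h); exact Or.inr (pr_symm h),
        h2.symm⟩
  loopless := by
    constructor
    intro x h
    rcases h with ⟨h1, _, _⟩ | ⟨_, h2⟩
    · exact K.irrefl h1
    · exact h2 rfl

lemma card_insert_erase {A : Finset (Fin n)} {x y : Fin n} (hy : y ∈ A) (hx : x ∉ A) :
    (insert x (A.erase y)).card = A.card := by
  have hx' : x ∉ A.erase y := fun hc => hx (Finset.mem_of_mem_erase hc)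
  rw [Finset.card_insert_of_notMem hx', Finset.card_erase_of_mem hy]
  have := Finset.card_pos.mpr ⟨y, hy⟩
  omega


lemma sw_adj {K : SimpleGraph (Fin n)} {p q r s x y : Fin n} :
    (sw K p q r s).Adj x y ↔
      (K.Adj x y ∧ ¬ pr p q x y ∧ ¬ pr r s x y) ∨ ((pr p r x y ∨ pr q s x y) ∧ x ≠ y) :=
  Iff.rfl

lemma pr_comm (a b x y : Fin n) : pr a b x y ↔ pr b a x y := by unfold pr; tauto

lemma sw_comm1 (K : SimpleGraph (Fin n)) (p q r s : Fin n) :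
    sw K p q r s = sw K q p s r := by
  ext x y
  rw [sw_adj, sw_adj, pr_comm q p, pr_comm s r]
  tauto

lemma sw_comm2 (K : SimpleGraph (Fin n)) (p q r s : Fin n) :
    sw K p q r s = sw K r s p q := by
  ext x y
  rw [sw_adj, sw_adj, pr_comm r p, pr_comm s q]
  tauto

section swlem
variable {K : SimpleGraph (Fin n)} {p q r s v : Fin n}

lemma sw_deg_p (hpq : K.Adj p q) (hrs : K.Adj r s) (hpr : ¬ K.Adj p r)
    (hPR : p ≠ r) (hPS : p ≠ s) :
    (Nf (sw K p q r s) p).card = (Nf K p).card := by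
  have hpq' : p ≠ q := K.ne_of_adj hpq
  have he : Nf (sw K p q r s) p = insert r ((Nf K p).erase q) := by
    ext w
    simp only [mem_Nf, Finset.mem_insert, Finset.mem_erase]
    constructor
    · rintro (⟨h1, h2, _⟩ | ⟨h1 | h1, h2⟩)
      · exact Or.inr ⟨fun hw => h2 (Or.inl ⟨rfl, hw⟩), h1⟩
      · rcases h1 with ⟨_, hw⟩ | ⟨hc, _⟩
        · exact Or.inl hw
        · exact absurd hc hPR
      · rcases h1 with ⟨hc, _⟩ | ⟨hc, _⟩
        · exact absurd hc hpq'
        · exact absurd hc hPS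
    · rintro (hw | ⟨hw, h1⟩)
      · subst hw; exact Or.inr ⟨Or.inl (Or.inl ⟨rfl, rfl⟩), hPR⟩
      · refine Or.inl ⟨h1, ?_, ?_⟩
        · rintro (⟨_, hc⟩ | ⟨hc, _⟩); exact hw hc; exact hpq' hc
        · rintro (⟨hc, _⟩ | ⟨hc, _⟩); exact hPR hc; exact hPS hc
  rw [he, card_insert_erase (by simpa using hpq) (by simpa using hpr)]

lemma sw_deg_out (hv : v ≠ p) (hv2 : v ≠ q) (hv3 : v ≠ r) (hv4 : v ≠ s) :
    Nf (sw K p q r s) v = Nf K v := by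
  ext w
  simp only [mem_Nf]
  constructor
  · rintro (⟨h1, _, _⟩ | ⟨h1 | h1, _⟩)
    · exact h1
    · rcases h1 with ⟨hc, _⟩ | ⟨hc, _⟩; exact absurd hc hv; exact absurd hc hv3
    · rcases h1 with ⟨hc, _⟩ | ⟨hc, _⟩; exact absurd hc hv2; exact absurd hc hv4
  · intro h
    refine Or.inl ⟨h, ?_, ?_⟩
    · rintro (⟨hc, _⟩ | ⟨hc, _⟩); exact hv hc; exact hv2 hc
    · rintro (⟨hc, _⟩ | ⟨hc, _⟩); exact hv3 hc; exact hv4 hc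

lemma sw_deg (hpq : K.Adj p q) (hrs : K.Adj r s) (hpr : ¬ K.Adj p r) (hqs : ¬ K.Adj q s)
    (hPR : p ≠ r) (hPS : p ≠ s) (hQR : q ≠ r) (hQS : q ≠ s) (v : Fin n) :
    (Nf (sw K p q r s) v).card = (Nf K v).card := by
  by_cases hvp : v = p
  · subst hvp; exact sw_deg_p hpq hrs hpr hPR hPS
  by_cases hvq : v = q
  · subst hvq
    rw [sw_comm1]
    exact sw_deg_p hpq.symm hrs.symm hqs hQS hQR
  by_cases hvr : v = r
  · subst hvr
    rw [sw_comm2]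
    exact sw_deg_p hrs hpq (fun hc => hpr hc.symm) (Ne.symm hPR) (Ne.symm hQR)
  by_cases hvs : v = s
  · subst hvs
    rw [sw_comm2, sw_comm1]
    exact sw_deg_p hrs.symm hpq.symm (fun hc => hqs hc.symm) (Ne.symm hQS) (Ne.symm hPS)
  · rw [sw_deg_out hvp hvq hvr hvs]

end swlem

/-- measure: number of edges of H not in G -/
noncomputable def mes (H G : SimpleGraph (Fin n)) : ℕ :=
  (univ.filter (fun e : Sym2 (Fin n) => e ∈ H.edgeSet ∧ e ∉ G.edgeSet)).card

lemma mem_mesSet {H G : SimpleGraph (Fin n)} {x y : Fin n} :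
    s(x,y) ∈ univ.filter (fun e : Sym2 (Fin n) => e ∈ H.edgeSet ∧ e ∉ G.edgeSet) ↔
      H.Adj x y ∧ ¬ G.Adj x y := by
  simp

lemma pr_elim {a b u v : Fin n} (h : pr a b u v) {K : SimpleGraph (Fin n)}
    (hK : K.Adj a b) : K.Adj u v := by
  rcases h with ⟨rfl, rfl⟩ | ⟨rfl, rfl⟩
  · exact hK
  · exact hK.symm

lemma pr_elim' {a b u v : Fin n} (h : pr a b u v) {K : SimpleGraph (Fin n)}
    (hK : ¬ K.Adj a b) : ¬ K.Adj u v := by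
  rcases h with ⟨rfl, rfl⟩ | ⟨rfl, rfl⟩
  · exact hK
  · exact fun hc => hK hc.symm

lemma swapG_lem (G H : SimpleGraph (Fin n)) {x y c e : Fin n}
    (hxy : H.Adj x y) (hxyG : ¬ G.Adj x y) (hc : G.Adj x c) (hcH : ¬ H.Adj x c)
    (he : G.Adj y e) (heH : ¬ H.Adj y e) (hce : c ≠ e) (hceG : ¬ G.Adj c e) :
    ∃ G', (∀ v, (Nf G' v).card = (Nf G v).card) ∧ mes H G' < mes H G := by
  have hXY : x ≠ y := hxy.ne
  have hXE : x ≠ e := fun hh => hxyG (hh ▸ he).symm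
  have hCY : c ≠ y := fun hh => hcH (hh ▸ hxy)
  refine ⟨sw G x c y e, fun v => sw_deg hc he hxyG hceG hXY hXE hCY hce v, ?_⟩
  have hsub : (univ.filter (fun e' : Sym2 (Fin n) =>
      e' ∈ H.edgeSet ∧ e' ∉ (sw G x c y e).edgeSet)) ⊆
      (univ.filter (fun e' : Sym2 (Fin n) => e' ∈ H.edgeSet ∧ e' ∉ G.edgeSet)).erase s(x,y) := by
    intro e' he'
    induction e' using Sym2.ind with
    | _ u v =>
      rw [mem_mesSet] at he'
      obtain ⟨h1, h2⟩ := he'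
      rw [sw_adj] at h2
      push_neg at h2
      obtain ⟨h2a, h2b⟩ := h2
      have huv : u ≠ v := h1.ne
      have hnpr : ¬ pr x y u v ∧ ¬ pr c e u v := by
        by_contra hcc
        rcases not_and_or.mp hcc with hcc | hcc
        · push_neg at hcc; exact huv (h2b (Or.inl hcc))
        · push_neg at hcc; exact huv (h2b (Or.inr hcc))
      have hnG : ¬ G.Adj u v := by
        intro hG'
        by_cases hp : pr x c u v
        · rcases hp with ⟨rfl, rfl⟩ | ⟨rfl, rfl⟩
          · exact hcH h1
          · exact hcH h1.symm
        · rcases h2a hG' hp with ⟨rfl, rfl⟩ | ⟨rfl, rfl⟩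
          · exact heH h1
          · exact heH h1.symm
      rw [Finset.mem_erase, mem_mesSet]
      exact ⟨fun hh => hnpr.1 (pr_iff.mpr hh), h1, hnG⟩
  have hmem : s(x,y) ∈ (univ.filter (fun e' : Sym2 (Fin n) =>
      e' ∈ H.edgeSet ∧ e' ∉ G.edgeSet)) := mem_mesSet.mpr ⟨hxy, hxyG⟩
  have h1 := Finset.card_le_card hsub
  have h2 := Finset.card_erase_add_one hmem
  unfold mes
  omega

lemma swapH2_lem (G H : SimpleGraph (Fin n)) {x y c e : Fin n}
    (hxy : H.Adj x y) (hxyG : ¬ G.Adj x y)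
    (hce : H.Adj c e) (hxc : ¬ H.Adj x c) (hye : ¬ H.Adj y e)
    (hxcG : G.Adj x c) (hyeG : G.Adj y e) :
    ∃ H', (∀ v, (Nf H' v).card = (Nf H v).card) ∧ mes H' G < mes H G := by
  have hXC : x ≠ c := hxcG.ne
  have hXE : x ≠ e := fun hh => hxc (hh ▸ hce.symm)
  have hYC : y ≠ c := fun hh => hye (hh ▸ hce)
  have hYE : y ≠ e := hyeG.ne
  refine ⟨sw H x y c e, fun v => sw_deg hxy hce hxc hye hXC hXE hYC hYE v, ?_⟩
  have hsub : (univ.filter (fun e' : Sym2 (Fin n) =>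
      e' ∈ (sw H x y c e).edgeSet ∧ e' ∉ G.edgeSet)) ⊆
      (univ.filter (fun e' : Sym2 (Fin n) => e' ∈ H.edgeSet ∧ e' ∉ G.edgeSet)).erase s(x,y) := by
    intro e' he'
    induction e' using Sym2.ind with
    | _ u v =>
      rw [mem_mesSet] at he'
      obtain ⟨h1, h2⟩ := he'
      rw [sw_adj] at h1
      rcases h1 with ⟨h1, hp1, _⟩ | ⟨hp, _⟩
      · rw [Finset.mem_erase, mem_mesSet]
        exact ⟨fun hh => hp1 (pr_iff.mpr hh), h1, h2⟩
      · exfalso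
        rcases hp with hp | hp
        · exact h2 (pr_elim hp hxcG)
        · exact h2 (pr_elim hp hyeG)
  have hmem : s(x,y) ∈ (univ.filter (fun e' : Sym2 (Fin n) =>
      e' ∈ H.edgeSet ∧ e' ∉ G.edgeSet)) := mem_mesSet.mpr ⟨hxy, hxyG⟩
  have h1 := Finset.card_le_card hsub
  have h2 := Finset.card_erase_add_one hmem
  unfold mes
  omega

lemma swapH4_lem (G H : SimpleGraph (Fin n)) {x y c e : Fin n}
    (hxy : H.Adj x y) (hxyG : ¬ G.Adj x y)
    (hce : H.Adj c e) (hceG : ¬ G.Adj c e)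
    (hxc : ¬ H.Adj x c) (hxcG : G.Adj x c)
    (hye : ¬ H.Adj y e) (hYE : y ≠ e) :
    ∃ H', (∀ v, (Nf H' v).card = (Nf H v).card) ∧ mes H' G < mes H G := by
  have hXC : x ≠ c := hxcG.ne
  have hXE : x ≠ e := fun hh => hxc (hh ▸ hce.symm)
  have hYC : y ≠ c := fun hh => hye (hh ▸ hce)
  refine ⟨sw H x y c e, fun v => sw_deg hxy hce hxc hye hXC hXE hYC hYE v, ?_⟩
  have hne : (s(c,e) : Sym2 (Fin n)) ≠ s(x,y) := by
    intro hh
    rcases Sym2.eq_iff.mp hh with ⟨rfl, rfl⟩ | ⟨rfl, rfl⟩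
    · exact hXC rfl
    · exact hXE rfl
  have hsub : (univ.filter (fun e' : Sym2 (Fin n) =>
      e' ∈ (sw H x y c e).edgeSet ∧ e' ∉ G.edgeSet)) ⊆
      insert s(y,e) (((univ.filter (fun e' : Sym2 (Fin n) =>
        e' ∈ H.edgeSet ∧ e' ∉ G.edgeSet)).erase s(x,y)).erase s(c,e)) := by
    intro e' he'
    induction e' using Sym2.ind with
    | _ u v =>
      rw [mem_mesSet] at he'
      obtain ⟨h1, h2⟩ := he'
      rw [sw_adj] at h1
      rcases h1 with ⟨h1, hp1, hp2⟩ | ⟨hp, _⟩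
      · rw [Finset.mem_insert, Finset.mem_erase, Finset.mem_erase, mem_mesSet]
        exact Or.inr ⟨fun hh => hp2 (pr_iff.mpr hh), fun hh => hp1 (pr_iff.mpr hh), h1, h2⟩
      · rcases hp with hp | hp
        · exact absurd (pr_elim hp hxcG) h2
        · rw [Finset.mem_insert]
          exact Or.inl (pr_iff.mp hp)
  have hmem : s(x,y) ∈ (univ.filter (fun e' : Sym2 (Fin n) =>
      e' ∈ H.edgeSet ∧ e' ∉ G.edgeSet)) := mem_mesSet.mpr ⟨hxy, hxyG⟩
  have hmem2 : s(c,e) ∈ ((univ.filter (fun e' : Sym2 (Fin n) =>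
      e' ∈ H.edgeSet ∧ e' ∉ G.edgeSet)).erase s(x,y)) :=
    Finset.mem_erase.mpr ⟨hne, mem_mesSet.mpr ⟨hce, hceG⟩⟩
  have h1 := Finset.card_le_card hsub
  have h2 := Finset.card_erase_add_one hmem
  have h3 := Finset.card_erase_add_one hmem2
  have h4 := Finset.card_insert_le (s(y,e) : Sym2 (Fin n))
    (((univ.filter (fun e' : Sym2 (Fin n) =>
      e' ∈ H.edgeSet ∧ e' ∉ G.edgeSet)).erase s(x,y)).erase s(c,e))
  unfold mes
  omega

lemma step_lem (d : Fin n → ℕ) (k : ℕ) (hk : ∀ i, k ≤ d i)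
    (G H : SimpleGraph (Fin n))
    (hG : ∀ v, (Nf G v).card = d v) (hH : ∀ v, (Nf H v).card = d v - k)
    (h0 : 0 < mes H G) :
    ∃ G' H', (∀ v, (Nf G' v).card = d v) ∧ (∀ v, (Nf H' v).card = d v - k) ∧
      mes H' G' < mes H G := by
  by_contra hcon
  push_neg at hcon
  -- notation
  set D : Fin n → Finset (Fin n) := fun x => Nf G x \ Nf H x with hD
  set U : Fin n → Finset (Fin n) := fun x => Nf H x \ Nf G x with hU
  set t : Fin n → ℕ := fun x => (U x).card with ht
  have memD : ∀ {x w : Fin n}, w ∈ D x ↔ G.Adj x w ∧ ¬ H.Adj x w := by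
    intro x w; simp [hD, Finset.mem_sdiff]
  have memU : ∀ {x w : Fin n}, w ∈ U x ↔ H.Adj x w ∧ ¬ G.Adj x w := by
    intro x w; simp [hU, Finset.mem_sdiff]
  have cardD : ∀ x, (D x).card = k + t x := by
    intro x
    have h1 : (Nf G x \ Nf H x).card + (Nf G x ∩ Nf H x).card = (Nf G x).card :=
      Finset.card_sdiff_add_card_inter _ _
    have h2 : (Nf H x \ Nf G x).card + (Nf H x ∩ Nf G x).card = (Nf H x).card :=
      Finset.card_sdiff_add_card_inter _ _
    have h3 : (Nf G x ∩ Nf H x).card = (Nf H x ∩ Nf G x).card := by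
      rw [Finset.inter_comm]
    have h7 : t x = (U x).card := rfl
    have h8 : (D x).card = (Nf G x \ Nf H x).card := rfl
    have h9 : (U x).card = (Nf H x \ Nf G x).card := rfl
    have h4 := hG x
    have h5 := hH x
    have h6 := hk x
    simp only [hD, hU, ht]
    omega
  -- the three structural facts
  have F1 : ∀ x y c e, H.Adj x y → ¬ G.Adj x y → c ∈ D x → e ∈ D y → c ≠ e →
      G.Adj c e := by
    intro x y c e hxy hxyG hc he hne
    by_contra hceG
    obtain ⟨G', hG'deg, hlt⟩ := swapG_lem G H hxy hxyG (memD.mp hc).1 (memD.mp hc).2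
      (memD.mp he).1 (memD.mp he).2 hne hceG
    exact absurd hlt (not_lt.mpr (hcon G' H (fun v => (hG'deg v).trans (hG v)) hH))
  have F2 : ∀ x y c e, H.Adj x y → ¬ G.Adj x y → c ∈ D x → e ∈ D y → c ≠ e →
      ¬ H.Adj c e := by
    intro x y c e hxy hxyG hc he hne
    intro hceH
    obtain ⟨H', hH'deg, hlt⟩ := swapH2_lem G H hxy hxyG hceH (memD.mp hc).2
      (memD.mp he).2 (memD.mp hc).1 (memD.mp he).1
    exact absurd hlt (not_lt.mpr (hcon G H' hG (fun v => (hH'deg v).trans (hH v))))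
  have F4 : ∀ x y c f, H.Adj x y → ¬ G.Adj x y → c ∈ D x → f ∈ U c → f ≠ y →
      H.Adj y f := by
    intro x y c f hxy hxyG hc hf hne
    by_contra hyf
    obtain ⟨H', hH'deg, hlt⟩ := swapH4_lem G H hxy hxyG (memU.mp hf).1 (memU.mp hf).2
      (memD.mp hc).2 (memD.mp hc).1 hyf (Ne.symm hne)
    exact absurd hlt (not_lt.mpr (hcon G H' hG (fun v => (hH'deg v).trans (hH v))))
  -- Fact 3+
  have F3 : ∀ x y z, H.Adj x y → ¬ G.Adj x y → z ∈ D y →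
      t x ≤ t z ∧ (t z = t x → z ∈ D x ∧ D z = insert y ((D x).erase z)) := by
    intro x y z hxy hxyG hz
    have hyD : y ∈ D z := by
      rw [memD]
      exact ⟨(memD.mp hz).1.symm, fun hh => (memD.mp hz).2 hh.symm⟩
    have hsub : insert y ((D x).erase z) ⊆ D z := by
      intro w hw
      rcases Finset.mem_insert.mp hw with rfl | hw
      · exact hyD
      · obtain ⟨hwz, hwx⟩ := Finset.mem_erase.mp hw
        rw [memD]
        exact ⟨(F1 x y w z hxy hxyG hwx hz hwz).symm,
          fun hh => (F2 x y w z hxy hxyG hwx hz hwz) hh.symm⟩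
    have hyx : y ∉ (D x).erase z := by
      intro hh
      exact hxyG (memD.mp (Finset.mem_of_mem_erase hh)).1
    have hcard : ((D x).erase z).card + 1 ≤ (D z).card := by
      have := Finset.card_le_card hsub
      rwa [Finset.card_insert_of_notMem hyx] at this
    by_cases hzx : z ∈ D x
    · have he1 : ((D x).erase z).card + 1 = (D x).card := Finset.card_erase_add_one hzx
      constructor
      · have := cardD x; have := cardD z; omega
      · intro heq
        refine ⟨hzx, ?_⟩
        have hle : (D z).card ≤ (insert y ((D x).erase z)).card := by
          rw [Finset.card_insert_of_notMem hyx]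
          have := cardD x; have := cardD z; omega
        exact (Finset.eq_of_subset_of_card_le hsub hle).symm
    · have he1 : (D x).erase z = D x := Finset.erase_eq_of_notMem hzx
      rw [he1] at hcard
      have c1 := cardD x; have c2 := cardD z
      constructor
      · omega
      · intro heq; omega
  -- choose a vertex of maximal t
  obtain ⟨e0, he0⟩ := Finset.card_pos.mp h0
  obtain ⟨a0, b0, hab0⟩ : ∃ a0 b0 : Fin n, H.Adj a0 b0 ∧ ¬ G.Adj a0 b0 := by
    induction e0 using Sym2.ind with
    | _ u v => exact ⟨u, v, mem_mesSet.mp he0⟩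
  have hb0 : 1 ≤ t b0 := by
    have : a0 ∈ U b0 := memU.mpr ⟨hab0.1.symm, fun hh => hab0.2 hh.symm⟩
    have := Finset.card_pos.mpr ⟨a0, this⟩
    simpa [ht] using this
  obtain ⟨a, -, hmax⟩ := Finset.exists_max_image (univ : Finset (Fin n)) t ⟨b0, Finset.mem_univ _⟩
  have hta : 1 ≤ t a := le_trans hb0 (hmax b0 (Finset.mem_univ _))
  obtain ⟨b, hbU⟩ := Finset.card_pos.mp (by simpa [ht] using hta : 0 < (U a).card)
  have hab : H.Adj a b := (memU.mp hbU).1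
  have habG : ¬ G.Adj a b := (memU.mp hbU).2
  have htb : 1 ≤ t b := by
    have : a ∈ U b := memU.mpr ⟨hab.symm, fun hh => habG hh.symm⟩
    have := Finset.card_pos.mpr ⟨a, this⟩
    simpa [ht] using this
  -- pick d0 ∈ D b
  obtain ⟨d0, hd0⟩ := Finset.card_pos.mp (show 0 < (D b).card by rw [cardD b]; omega)
  obtain ⟨hle1, heq1⟩ := F3 a b d0 hab habG hd0
  have htd0 : t d0 = t a := le_antisymm (hmax d0 (Finset.mem_univ _)) hle1
  obtain ⟨hd0a, hDd0⟩ := heq1 htd0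
  -- pick f ∈ U d0
  obtain ⟨f, hf⟩ := Finset.card_pos.mp (show 0 < (U d0).card by
    have : (U d0).card = t d0 := rfl
    omega)
  have hd0f : H.Adj d0 f := (memU.mp hf).1
  have hd0fG : ¬ G.Adj d0 f := (memU.mp hf).2
  have hfa : f ≠ a := by
    rintro rfl
    exact (memD.mp hd0a).2 hd0f.symm
  have hfb : f ≠ b := by
    rintro rfl
    exact (memD.mp hd0).2 hd0f.symm
  have htf : 1 ≤ t f := by
    have : d0 ∈ U f := memU.mpr ⟨hd0f.symm, fun hh => hd0fG hh.symm⟩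
    have := Finset.card_pos.mpr ⟨d0, this⟩
    simpa [ht] using this
  -- pick y0 ∈ D f
  obtain ⟨y0, hy0⟩ := Finset.card_pos.mp (show 0 < (D f).card by rw [cardD f]; omega)
  obtain ⟨hle2, heq2⟩ := F3 d0 f y0 hd0f hd0fG hy0
  have hty0 : t y0 = t d0 := le_antisymm (by rw [htd0]; exact hmax y0 (Finset.mem_univ _)) hle2
  obtain ⟨hy0d0, hDy0⟩ := heq2 hty0
  -- y0 ∈ D d0 = insert b ((D a).erase d0)
  rw [hDd0] at hy0d0
  rcases Finset.mem_insert.mp hy0d0 with rfl | hy0a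
  · -- y0 = b (b has been substituted by y0)
    have hfDb : f ∈ D y0 := by
      rw [hDy0]
      exact Finset.mem_insert_self _ _
    exact (memD.mp hfDb).2 (F4 a y0 d0 f hab habG hd0a hf hfb)
  · -- y0 ∈ (D a).erase d0
    obtain ⟨hy0ne, hy0Da⟩ := Finset.mem_erase.mp hy0a
    have hd0Dy0 : d0 ∈ D y0 := by
      rw [memD]
      exact ⟨(F1 a b y0 d0 hab habG hy0Da hd0 hy0ne),
        (F2 a b y0 d0 hab habG hy0Da hd0 hy0ne)⟩
    rw [hDy0] at hd0Dy0
    rcases Finset.mem_insert.mp hd0Dy0 with hh | hh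
    · exact hd0f.ne hh
    · exact G.irrefl (memD.mp (Finset.mem_of_mem_erase hh)).1

lemma le_of_mes_zero {H G : SimpleGraph (Fin n)} (h : mes H G = 0) : H ≤ G := by
  intro a b hab
  by_contra hG'
  have : s(a,b) ∈ (univ.filter (fun e : Sym2 (Fin n) => e ∈ H.edgeSet ∧ e ∉ G.edgeSet)) :=
    mem_mesSet.mpr ⟨hab, hG'⟩
  have := Finset.card_pos.mpr ⟨_, this⟩
  unfold mes at h
  omega

lemma key_lem (d : Fin n → ℕ) (k : ℕ) (hk : ∀ i, k ≤ d i) :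
    ∀ m (G H : SimpleGraph (Fin n)),
      (∀ v, (Nf G v).card = d v) → (∀ v, (Nf H v).card = d v - k) → mes H G ≤ m →
      ∃ G' H', (∀ v, (Nf G' v).card = d v) ∧ (∀ v, (Nf H' v).card = d v - k) ∧ H' ≤ G' := by
  intro m
  induction m with
  | zero =>
    intro G H hG hH hm
    exact ⟨G, H, hG, hH, le_of_mes_zero (Nat.le_zero.mp hm)⟩
  | succ m ih =>
    intro G H hG hH hm
    by_cases h0 : mes H G = 0
    · exact ⟨G, H, hG, hH, le_of_mes_zero h0⟩
    · obtain ⟨G', H', hG', hH', hlt⟩ := step_lem d k hk G H hG hH (Nat.pos_of_ne_zero h0)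
      exact ih G' H' hG' hH' (by omega)

/-- difference graph -/
def dif (Gg Hh : SimpleGraph (Fin n)) : SimpleGraph (Fin n) where
  Adj x y := Gg.Adj x y ∧ ¬ Hh.Adj x y
  symm := ⟨fun x y ⟨h1, h2⟩ => ⟨h1.symm, fun hc => h2 hc.symm⟩⟩
  loopless := ⟨fun x ⟨h1, _⟩ => Gg.irrefl h1⟩

lemma Nf_dif (Gg Hh : SimpleGraph (Fin n)) (v : Fin n) :
    Nf (dif Gg Hh) v = Nf Gg v \ Nf Hh v := by
  ext w
  simp only [mem_Nf, Finset.mem_sdiff]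
  rfl

lemma card_Nf_dif {Gg Hh : SimpleGraph (Fin n)} (hle : Hh ≤ Gg) (v : Fin n) :
    (Nf (dif Gg Hh) v).card = (Nf Gg v).card - (Nf Hh v).card := by
  rw [Nf_dif, Finset.card_sdiff_of_subset]
  intro w hw
  exact mem_Nf.mpr (hle (mem_Nf.mp hw))

lemma ncard_eq_Nf (K : SimpleGraph (Fin n)) (v : Fin n) :
    (K.neighborSet v).ncard = (Nf K v).card := by
  have : K.neighborSet v = ↑(Nf K v) := by
    ext w; simp [SimpleGraph.mem_neighborSet]
  rw [this, Set.ncard_coe_finset]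

open SimpleGraph

/-- A sequence `d : Fin n → ℕ` is graphic if it is realized by a simple graph on `Fin n`. -/
def IsGraphic {n : ℕ} (d : Fin n → ℕ) : Prop :=
  ∃ G : SimpleGraph (Fin n), ∀ v, (G.neighborSet v).ncard = d v

/-- Kundu's theorem: a graphic sequence `π` has a realization containing a
`k`-factor if and only if `π - k` is graphic. -/
theorem stmt7 {n : ℕ} (d : Fin n → ℕ) (k : ℕ) (hd : IsGraphic d) (hk : ∀ i, k ≤ d i) :
    (∃ G : SimpleGraph (Fin n), (∀ v, (G.neighborSet v).ncard = d v) ∧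
        ∃ H : SimpleGraph (Fin n), H ≤ G ∧ ∀ v, (H.neighborSet v).ncard = k) ↔
    IsGraphic (fun i => d i - k) := by
  constructor
  · rintro ⟨G, hG, H, hHG, hH⟩
    refine ⟨dif G H, fun v => ?_⟩
    rw [ncard_eq_Nf, card_Nf_dif hHG]
    have h1 : (Nf G v).card = d v := (ncard_eq_Nf G v).symm.trans (hG v)
    have h2 : (Nf H v).card = k := (ncard_eq_Nf H v).symm.trans (hH v)
    simp only [h1, h2]
  · rintro ⟨F, hF⟩
    obtain ⟨G0, hG0⟩ := hd
    have hG0' : ∀ v, (Nf G0 v).card = d v := fun v => (ncard_eq_Nf G0 v).symm.trans (hG0 v)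
    have hF' : ∀ v, (Nf F v).card = d v - k := fun v => (ncard_eq_Nf F v).symm.trans (hF v)
    obtain ⟨G', H', hG', hH', hle⟩ := key_lem d k hk (mes F G0) G0 F hG0' hF' le_rfl
    refine ⟨G', fun v => (ncard_eq_Nf G' v).trans (hG' v), dif G' H', fun x y h => h.1, fun v => ?_⟩
    rw [ncard_eq_Nf, card_Nf_dif hle, hG' v, hH' v]
    have := hk v
    omega
end
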